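/- arXiv:1204.3358 — 7 statements merged into one kernel-verified Lean document; each statement's English description precedes it below -/
import Mathlib

section
/- (Normal equations characterization.) In the setting of the Kalman gain problem, K ∈ ℝ^{p×q} minimizes E‖X − K Y‖²_D over ℝ^{p×q} if and only if π K Cov(Y) = π Cov(X,Y), where π = D⁻ D is the orthogonal projector onto the column space of D. -/
open Matrix MeasureTheory ProbabilityTheory

/-- Cross-covariance matrix `E[U Wᵀ]` of two mean-zero random vectors. -/
noncomputable def covMatrix {Ω : Type*} [MeasurableSpace Ω] (μ : Measure Ω)
    {p q : ℕ} (U : Ω → Fin p → ℝ) (W : Ω → Fin q → ℝ) :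
    Matrix (Fin p) (Fin q) ℝ :=
  Matrix.of fun i j => ∫ ω, U ω i * W ω j ∂μ

open scoped ENNReal

section helpers
variable {Ω : Type*} [MeasurableSpace Ω] {μ : Measure Ω} {p q m : ℕ}

lemma l2_mul_integrable {f g : Ω → ℝ} (hf : MemLp f 2 μ) (hg : MemLp g 2 μ) :
    Integrable (fun ω => f ω * g ω) μ := by
  have h : (1 : ℝ≥0∞)/1 = 1/2 + 1/2 := by
    rw [ENNReal.div_self one_ne_zero ENNReal.one_ne_top]; norm_num
    rw [← two_mul, ENNReal.mul_inv_cancel two_ne_zero ENNReal.ofNat_ne_top]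
  have := (hg.smul hf (hpqr := ⟨by rw [inv_one, ← two_mul, ENNReal.mul_inv_cancel two_ne_zero ENNReal.ofNat_ne_top]⟩) : MemLp (f • g) 1 μ)
  exact memLp_one_iff_integrable.mp this

lemma memL2_mulVec {W : Ω → Fin q → ℝ} (hW : ∀ j, MemLp (fun ω => W ω j) 2 μ)
    (A : Matrix (Fin m) (Fin q) ℝ) (i : Fin m) :
    MemLp (fun ω => A.mulVec (W ω) i) 2 μ := by
  simp only [mulVec, dotProduct]
  exact memLp_finset_sum _ (fun j _ => (hW j).const_mul (A i j))

lemma covMatrix_transpose (U : Ω → Fin p → ℝ) (W : Ω → Fin q → ℝ) :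
    (covMatrix μ U W)ᵀ = covMatrix μ W U := by
  ext i j
  simp only [covMatrix, transpose_apply, of_apply, mul_comm]

lemma covMatrix_mulVec_left (A : Matrix (Fin m) (Fin p) ℝ) (U : Ω → Fin p → ℝ)
    (W : Ω → Fin q → ℝ) (hU : ∀ i, MemLp (fun ω => U ω i) 2 μ)
    (hW : ∀ j, MemLp (fun ω => W ω j) 2 μ) :
    covMatrix μ (fun ω => A.mulVec (U ω)) W = A * covMatrix μ U W := by
  ext i j
  simp only [covMatrix, of_apply, mul_apply, mulVec, dotProduct]
  rw [show (fun ω => (∑ k, A i k * U ω k) * W ω j)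
      = fun ω => ∑ k, A i k * (U ω k * W ω j) by
    funext ω; rw [Finset.sum_mul]; exact Finset.sum_congr rfl fun k _ => by ring]
  rw [integral_finset_sum _ (fun k _ => (l2_mul_integrable (hU k) (hW j)).const_mul (A i k))]
  exact Finset.sum_congr rfl fun k _ => integral_const_mul _ _

lemma covMatrix_mulVec_right (A : Matrix (Fin m) (Fin q) ℝ) (U : Ω → Fin p → ℝ)
    (W : Ω → Fin q → ℝ) (hU : ∀ i, MemLp (fun ω => U ω i) 2 μ)
    (hW : ∀ j, MemLp (fun ω => W ω j) 2 μ) :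
    covMatrix μ U (fun ω => A.mulVec (W ω)) = covMatrix μ U W * Aᵀ := by
  have := congrArg Matrix.transpose
    (covMatrix_mulVec_left A W U hW hU (μ := μ))
  rw [covMatrix_transpose, transpose_mul, covMatrix_transpose] at this
  exact this

lemma covMatrix_sub_left (U V : Ω → Fin p → ℝ) (W : Ω → Fin q → ℝ)
    (hU : ∀ i, MemLp (fun ω => U ω i) 2 μ) (hV : ∀ i, MemLp (fun ω => V ω i) 2 μ)
    (hW : ∀ j, MemLp (fun ω => W ω j) 2 μ) :
    covMatrix μ (fun ω => U ω - V ω) W = covMatrix μ U W - covMatrix μ V W := by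
  ext i j
  simp only [covMatrix, of_apply, Matrix.sub_apply, Pi.sub_apply]
  rw [show (fun ω => (U ω i - V ω i) * W ω j)
      = fun ω => U ω i * W ω j - V ω i * W ω j by funext ω; ring]
  exact integral_sub (l2_mul_integrable (hU i) (hW j)) (l2_mul_integrable (hV i) (hW j))

lemma covMatrix_sub_right (U : Ω → Fin p → ℝ) (V W : Ω → Fin q → ℝ)
    (hU : ∀ i, MemLp (fun ω => U ω i) 2 μ) (hV : ∀ j, MemLp (fun ω => V ω j) 2 μ)
    (hW : ∀ j, MemLp (fun ω => W ω j) 2 μ) :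
    covMatrix μ U (fun ω => V ω - W ω) = covMatrix μ U V - covMatrix μ U W := by
  have := congrArg Matrix.transpose (covMatrix_sub_left V W U hV hW hU (μ := μ))
  rw [covMatrix_transpose, transpose_sub, covMatrix_transpose, covMatrix_transpose] at this
  exact this

lemma integral_quadform (M : Matrix (Fin p) (Fin p) ℝ) (U : Ω → Fin p → ℝ)
    (hU : ∀ i, MemLp (fun ω => U ω i) 2 μ) :
    ∫ ω, U ω ⬝ᵥ M.mulVec (U ω) ∂μ = ∑ i, ∑ k, M i k * covMatrix μ U U i k := by
  have h1 : (fun ω => U ω ⬝ᵥ M.mulVec (U ω))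
      = fun ω => ∑ x ∈ (Finset.univ ×ˢ Finset.univ : Finset (Fin p × Fin p)),
        M x.1 x.2 * (U ω x.1 * U ω x.2) := by
    funext ω
    rw [Finset.sum_product]
    simp only [dotProduct, mulVec, Finset.mul_sum]
    exact Finset.sum_congr rfl fun i _ => Finset.sum_congr rfl fun k _ => by ring
  rw [h1, integral_finset_sum _
    (fun x _ => (l2_mul_integrable (hU x.1) (hU x.2)).const_mul (M x.1 x.2))]
  rw [Finset.sum_product]
  exact Finset.sum_congr rfl fun i _ => Finset.sum_congr rfl fun k _ => by
    rw [integral_const_mul]; rfl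

lemma covMatrix_self_posSemidef (U : Ω → Fin q → ℝ)
    (hU : ∀ j, MemLp (fun ω => U ω j) 2 μ) :
    (covMatrix μ U U).PosSemidef := by
  refine Matrix.PosSemidef.of_dotProduct_mulVec_nonneg ?_ ?_
  · show (covMatrix μ U U)ᴴ = _
    rw [conjTranspose_eq_transpose_of_trivial, covMatrix_transpose]
  · intro x
    have h := integral_quadform (Matrix.of fun i k => x i * x k) U hU
    have h2 : ∀ ω, U ω ⬝ᵥ (Matrix.of fun i k => x i * x k).mulVec (U ω)
        = (x ⬝ᵥ U ω) * (x ⬝ᵥ U ω) := by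
      intro ω
      simp only [dotProduct, mulVec, of_apply, Finset.mul_sum, Finset.sum_mul]
      exact Finset.sum_congr rfl fun i _ => Finset.sum_congr rfl fun k _ => by ring
    have h3 : star x ⬝ᵥ (covMatrix μ U U).mulVec x
        = ∑ i, ∑ k, (Matrix.of fun i k => x i * x k) i k * covMatrix μ U U i k := by
      simp only [star_trivial, dotProduct, mulVec, of_apply, Finset.mul_sum]
      exact Finset.sum_congr rfl fun i _ => Finset.sum_congr rfl fun k _ => by ring
    rw [h3, ← h]
    refine integral_nonneg fun ω => ?_
    rw [h2]
    exact mul_self_nonneg _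

end helpers
section matrixHelpers
variable {a b p q n : ℕ}

lemma trace_mul_transpose_self_nonneg (M : Matrix (Fin a) (Fin b) ℝ) :
    0 ≤ Matrix.trace (M * Mᵀ) := by
  simp only [Matrix.trace, Matrix.diag_apply, Matrix.mul_apply, Matrix.transpose_apply]
  exact Finset.sum_nonneg fun i _ => Finset.sum_nonneg fun j _ => mul_self_nonneg _

lemma eq_zero_of_trace_mul_transpose_self {M : Matrix (Fin a) (Fin b) ℝ}
    (h : Matrix.trace (M * Mᵀ) = 0) : M = 0 := by
  simp only [Matrix.trace, Matrix.diag_apply, Matrix.mul_apply, Matrix.transpose_apply] at h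
  ext i j
  have h1 := (Finset.sum_eq_zero_iff_of_nonneg
    (fun i _ => Finset.sum_nonneg fun j _ => mul_self_nonneg (M i j))).mp h i (Finset.mem_univ i)
  have h2 := (Finset.sum_eq_zero_iff_of_nonneg
    (fun j _ => mul_self_nonneg (M i j))).mp h1 j (Finset.mem_univ j)
  simpa using mul_self_eq_zero.mp h2

lemma trace_psd_psd_nonneg {P : Matrix (Fin p) (Fin p) ℝ} {Q : Matrix (Fin q) (Fin q) ℝ}
    (hP : P.PosSemidef) (hQ : Q.PosSemidef) (B : Matrix (Fin p) (Fin q) ℝ) :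
    0 ≤ Matrix.trace (P * B * Q * Bᵀ) := by
  obtain ⟨A, hA⟩ : ∃ A : Matrix (Fin p) (Fin p) ℝ, P = Aᴴ * A := by
    open scoped MatrixOrder in exact CStarAlgebra.nonneg_iff_eq_star_mul_self.mp hP.nonneg
  obtain ⟨C, hC⟩ : ∃ C : Matrix (Fin q) (Fin q) ℝ, Q = Cᴴ * C := by
    open scoped MatrixOrder in exact CStarAlgebra.nonneg_iff_eq_star_mul_self.mp hQ.nonneg
  rw [Matrix.conjTranspose_eq_transpose_of_trivial] at hA hC
  calc (0:ℝ) ≤ Matrix.trace ((A*B*Cᵀ) * (A*B*Cᵀ)ᵀ) := trace_mul_transpose_self_nonneg _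
  _ = Matrix.trace ((A*B*Cᵀ*C*Bᵀ) * Aᵀ) := by
      simp only [Matrix.transpose_mul, Matrix.transpose_transpose, Matrix.mul_assoc]
  _ = Matrix.trace (Aᵀ * (A*B*Cᵀ*C*Bᵀ)) := Matrix.trace_mul_comm _ _
  _ = Matrix.trace (P * B * Q * Bᵀ) := by rw [hA, hC]; simp only [Matrix.mul_assoc]

lemma pinv_unique {A G1 G2 : Matrix (Fin n) (Fin n) ℝ}
    (h1 : A*G1*A = A) (h2 : G1*A*G1 = G1) (h3 : (A*G1)ᵀ = A*G1) (h4 : (G1*A)ᵀ = G1*A)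
    (h1' : A*G2*A = A) (h2' : G2*A*G2 = G2) (h3' : (A*G2)ᵀ = A*G2) (h4' : (G2*A)ᵀ = G2*A) :
    G1 = G2 := by
  have hA1 : A*G1 = A*G2 := by
    calc A*G1 = (A*G1)ᵀ := h3.symm
    _ = G1ᵀ*Aᵀ := Matrix.transpose_mul _ _
    _ = G1ᵀ*(A*G2*A)ᵀ := by rw [h1']
    _ = G1ᵀ*(Aᵀ*(A*G2)ᵀ) := by rw [Matrix.transpose_mul]
    _ = (G1ᵀ*Aᵀ)*(A*G2) := by rw [h3', Matrix.mul_assoc]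
    _ = (A*G1)ᵀ*(A*G2) := by rw [Matrix.transpose_mul]
    _ = (A*G1)*(A*G2) := by rw [h3]
    _ = (A*G1*A)*G2 := by simp only [Matrix.mul_assoc]
    _ = A*G2 := by rw [h1]
  have e : Aᵀ = (G2*A)*Aᵀ := by
    conv_lhs => rw [← h1', Matrix.mul_assoc, Matrix.transpose_mul, h4']
  have hA2 : G1*A = G2*A := by
    calc G1*A = (G1*A)ᵀ := h4.symm
    _ = Aᵀ*G1ᵀ := Matrix.transpose_mul _ _
    _ = ((G2*A)*Aᵀ)*G1ᵀ := by rw [← e]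
    _ = (G2*A)*(Aᵀ*G1ᵀ) := Matrix.mul_assoc _ _ _
    _ = (G2*A)*(G1*A)ᵀ := by rw [← Matrix.transpose_mul]
    _ = (G2*A)*(G1*A) := by rw [h4]
    _ = G2*(A*G1*A) := by simp only [Matrix.mul_assoc]
    _ = G2*A := by rw [h1]
  calc G1 = G1*A*G1 := h2.symm
  _ = (G2*A)*G1 := by rw [hA2]
  _ = G2*(A*G1) := Matrix.mul_assoc _ _ _
  _ = G2*(A*G2) := by rw [hA1]
  _ = G2*A*G2 := (Matrix.mul_assoc _ _ _).symm
  _ = G2 := h2'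

lemma double_sum_eq_trace (M C : Matrix (Fin p) (Fin p) ℝ) :
    ∑ i, ∑ k, M i k * C i k = Matrix.trace (M * Cᵀ) := by
  simp only [Matrix.trace, Matrix.diag_apply, Matrix.mul_apply, Matrix.transpose_apply]

lemma matrix_min_iff (D Dm CXX : Matrix (Fin p) (Fin p) ℝ)
    (CXY : Matrix (Fin p) (Fin q) ℝ) (CYY : Matrix (Fin q) (Fin q) ℝ)
    (hCYY : CYY.PosSemidef) (hDm : Dm.PosSemidef)
    (hcomm : Dm * D = D * Dm) (hD1 : Dm * D * Dm = Dm)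
    (hCYYT : CYYᵀ = CYY) (hDmT : Dmᵀ = Dm)
    (K : Matrix (Fin p) (Fin q) ℝ) :
    (∀ K' : Matrix (Fin p) (Fin q) ℝ, Matrix.trace (Dm * (CXX - K * CXYᵀ - CXY * Kᵀ + K * CYY * Kᵀ)) ≤
           Matrix.trace (Dm * (CXX - K' * CXYᵀ - CXY * K'ᵀ + K' * CYY * K'ᵀ)))
    ↔ Dm * D * K * CYY = Dm * D * CXY := by
  set N : Matrix (Fin p) (Fin q) ℝ := K * CYY - CXY with hN
  have hE : ∀ B : Matrix (Fin p) (Fin q) ℝ,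
      Matrix.trace (Dm * (CXX - (K+B) * CXYᵀ - CXY * (K+B)ᵀ + (K+B) * CYY * (K+B)ᵀ))
      = Matrix.trace (Dm * (CXX - K * CXYᵀ - CXY * Kᵀ + K * CYY * Kᵀ))
        + 2 * Matrix.trace (Dm * N * Bᵀ) + Matrix.trace (Dm * B * CYY * Bᵀ) := by
    intro B
    have h1 : Matrix.trace (Dm * (B * Nᵀ)) = Matrix.trace (Dm * N * Bᵀ) := by
      rw [← Matrix.trace_transpose (Dm * (B * Nᵀ))]
      simp only [Matrix.transpose_mul, Matrix.transpose_transpose, hDmT]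
      rw [Matrix.trace_mul_comm, ← Matrix.mul_assoc]
    have expand : Dm * (CXX - (K+B) * CXYᵀ - CXY * (K+B)ᵀ + (K+B) * CYY * (K+B)ᵀ)
        = Dm * (CXX - K * CXYᵀ - CXY * Kᵀ + K * CYY * Kᵀ)
          + Dm * (B * Nᵀ) + Dm * (N * Bᵀ) + Dm * (B * CYY * Bᵀ) := by
      rw [hN]
      simp only [Matrix.transpose_add, Matrix.transpose_sub, Matrix.transpose_mul, hCYYT, Matrix.mul_add,
        Matrix.add_mul, Matrix.mul_sub, Matrix.sub_mul, Matrix.mul_assoc]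
      abel
    rw [expand, Matrix.trace_add, Matrix.trace_add, Matrix.trace_add, h1]
    have h2 : Matrix.trace (Dm * (N * Bᵀ)) = Matrix.trace (Dm * N * Bᵀ) := by
      rw [Matrix.mul_assoc]
    have h3 : Matrix.trace (Dm * (B * CYY * Bᵀ)) = Matrix.trace (Dm * B * CYY * Bᵀ) := by
      simp only [Matrix.mul_assoc]
    rw [h2, h3]; ring
  constructor
  · intro hmin
    have hkey : ∀ B : Matrix (Fin p) (Fin q) ℝ, 0 ≤ 2 * Matrix.trace (Dm * N * Bᵀ) + Matrix.trace (Dm * B * CYY * Bᵀ) := by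
      intro B
      have h := hmin (K + B)
      rw [hE B] at h
      linarith
    have hzero : ∀ B : Matrix (Fin p) (Fin q) ℝ, Matrix.trace (Dm * N * Bᵀ) = 0 := by
      intro B
      set α := Matrix.trace (Dm * N * Bᵀ) with hα
      set β := Matrix.trace (Dm * B * CYY * Bᵀ) with hβ
      have hq : 0 ≤ β := trace_psd_psd_nonneg hDm hCYY B
      set t0 : ℝ := -α / (β + 1) with ht0
      have h := hkey (t0 • B)
      have e1 : Dm * N * (t0 • B)ᵀ = t0 • (Dm * N * Bᵀ) := by
        rw [Matrix.transpose_smul, Matrix.mul_smul]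
      have e2 : Dm * (t0 • B) * CYY * (t0 • B)ᵀ = (t0 * t0) • (Dm * B * CYY * Bᵀ) := by
        simp only [Matrix.transpose_smul, Matrix.mul_smul, Matrix.smul_mul, smul_smul]
      rw [e1, e2, Matrix.trace_smul, Matrix.trace_smul, smul_eq_mul, smul_eq_mul,
        ← hα, ← hβ] at h
      have hb1 : (0:ℝ) < β + 1 := by linarith
      have h2 : 0 ≤ (2 * (t0 * α) + t0 * t0 * β) * ((β+1)*(β+1)) :=
        mul_nonneg h (by positivity)
      have h3 : (2 * (t0 * α) + t0 * t0 * β) * ((β+1)*(β+1)) = -(α^2 * (β + 2)) := by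
        rw [ht0]; field_simp; ring
      nlinarith [sq_nonneg α]
    have hDmN : Dm * N = 0 := eq_zero_of_trace_mul_transpose_self (hzero (Dm * N))
    have hDDN : Dm * D * N = 0 := by
      calc Dm * D * N = D * (Dm * N) := by rw [hcomm, Matrix.mul_assoc]
      _ = 0 := by rw [hDmN, Matrix.mul_zero]
    rw [hN, Matrix.mul_sub] at hDDN
    have h4 := sub_eq_zero.mp hDDN
    rw [← Matrix.mul_assoc] at h4
    exact h4
  · intro heq K'
    have hDDN : Dm * D * N = 0 := by
      rw [hN, Matrix.mul_sub, sub_eq_zero, ← Matrix.mul_assoc]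
      exact heq
    have hDmN : Dm * N = 0 := by
      calc Dm * N = Dm * D * Dm * N := by rw [hD1]
      _ = Dm * (D * (Dm * N)) := by simp only [Matrix.mul_assoc]
      _ = Dm * (D * Dm * N) := by rw [Matrix.mul_assoc (D) Dm N]
      _ = Dm * (Dm * D * N) := by rw [← hcomm]
      _ = 0 := by rw [hDDN, Matrix.mul_zero]
    have hB : K + (K' - K) = K' := by abel
    have h := hE (K' - K)
    rw [hB] at h
    rw [h]
    have hz : Dm * N * (K' - K)ᵀ = 0 := by rw [hDmN, Matrix.zero_mul]
    rw [hz, Matrix.trace_zero]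
    have := trace_psd_psd_nonneg hDm hCYY (K' - K)
    linarith

end matrixHelpers

section symmHelpers
variable {n : ℕ}

lemma pinv_transpose_symm {D Dm : Matrix (Fin n) (Fin n) ℝ} (hDT : Dᵀ = D)
    (hD1 : Dm * D * Dm = Dm) (hD2 : D * Dm * D = D)
    (hD3 : (Dm * D)ᵀ = Dm * D) (hD4 : (D * Dm)ᵀ = D * Dm) : Dmᵀ = Dm := by
  have e3 : D * Dmᵀ = Dm * D := by
    rw [← hD3, Matrix.transpose_mul, hDT]
  have e4 : Dmᵀ * D = D * Dm := by
    rw [← hD4, Matrix.transpose_mul, hDT]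
  have h1' : D * Dmᵀ * D = D := by
    have := congrArg Matrix.transpose hD2
    simpa [Matrix.transpose_mul, hDT, Matrix.mul_assoc] using this
  have h2' : Dmᵀ * D * Dmᵀ = Dmᵀ := by
    have := congrArg Matrix.transpose hD1
    simpa [Matrix.transpose_mul, hDT, Matrix.mul_assoc] using this
  have h3' : (D * Dmᵀ)ᵀ = D * Dmᵀ := by rw [e3]; exact hD3
  have h4' : (Dmᵀ * D)ᵀ = Dmᵀ * D := by rw [e4]; exact hD4
  exact (pinv_unique hD2 hD1 hD4 hD3 h1' h2' h3' h4').symm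

end symmHelpers


/-- `K` minimizes `E‖X − K Y‖²_D` iff the normal equations
`π K Cov(Y) = π Cov(X,Y)` hold, where `π = D⁻ D`. -/
theorem kalman_gain_normal_equations {Ω : Type*} [MeasurableSpace Ω]
    (μ : Measure Ω) [IsProbabilityMeasure μ] {p q : ℕ}
    (X : Ω → Fin p → ℝ) (ε : Ω → Fin q → ℝ)
    (Z : Matrix (Fin q) (Fin p) ℝ)
    (hXmeas : Measurable X) (hεmeas : Measurable ε)
    (hXL2 : ∀ i, MemLp (fun ω => X ω i) 2 μ)
    (hεL2 : ∀ j, MemLp (fun ω => ε ω j) 2 μ)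
    (hXmean : ∀ i, ∫ ω, X ω i ∂μ = 0)
    (hεmean : ∀ j, ∫ ω, ε ω j ∂μ = 0)
    (hindep : IndepFun X ε μ)
    (Y : Ω → Fin q → ℝ) (hY : ∀ ω, Y ω = Z.mulVec (X ω) + ε ω)
    (D Dm : Matrix (Fin p) (Fin p) ℝ) (hD : D.PosSemidef)
    (hD1 : Dm * D * Dm = Dm) (hD2 : D * Dm * D = D)
    (hD3 : (Dm * D)ᵀ = Dm * D) (hD4 : (D * Dm)ᵀ = D * Dm)
    :
    ∀ K : Matrix (Fin p) (Fin q) ℝ,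
      (∀ K' : Matrix (Fin p) (Fin q) ℝ,
        (∫ ω, (X ω - K.mulVec (Y ω)) ⬝ᵥ Dm.mulVec (X ω - K.mulVec (Y ω)) ∂μ) ≤
        ∫ ω, (X ω - K'.mulVec (Y ω)) ⬝ᵥ Dm.mulVec (X ω - K'.mulVec (Y ω)) ∂μ)
      ↔ (Dm * D) * K * covMatrix μ Y Y = (Dm * D) * covMatrix μ X Y := by
  intro K
  have hDT : Dᵀ = D := by
    have h := hD.isHermitian
    rw [← Matrix.conjTranspose_eq_transpose_of_trivial]
    exact h
  have hDmT : Dmᵀ = Dm := pinv_transpose_symm hDT hD1 hD2 hD3 hD4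
  have hcomm : Dm * D = D * Dm := by
    rw [← hD3, Matrix.transpose_mul, hDT, hDmT]
  have hDmPSD : Dm.PosSemidef := by
    have h := hD.conjTranspose_mul_mul_same Dm
    rwa [Matrix.conjTranspose_eq_transpose_of_trivial, hDmT, hD1] at h
  have hYL2 : ∀ j, MemLp (fun ω => Y ω j) 2 μ := by
    intro j
    have hfe : (fun ω => Y ω j) = fun ω => Z.mulVec (X ω) j + ε ω j := by
      funext ω; rw [hY]; rfl
    rw [hfe]
    exact (memL2_mulVec hXL2 Z j).add (hεL2 j)
  have hCYYpsd : (covMatrix μ Y Y).PosSemidef := covMatrix_self_posSemidef Y hYL2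
  have hCYYT : (covMatrix μ Y Y)ᵀ = covMatrix μ Y Y := covMatrix_transpose Y Y
  have key : ∀ L : Matrix (Fin p) (Fin q) ℝ,
      (∫ ω, (X ω - L.mulVec (Y ω)) ⬝ᵥ Dm.mulVec (X ω - L.mulVec (Y ω)) ∂μ)
      = Matrix.trace (Dm * (covMatrix μ X X - L * (covMatrix μ X Y)ᵀ
          - covMatrix μ X Y * Lᵀ + L * covMatrix μ Y Y * Lᵀ)) := by
    intro L
    have hLY : ∀ i, MemLp (fun ω => L.mulVec (Y ω) i) 2 μ := memL2_mulVec hYL2 L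
    have hUL : ∀ i, MemLp (fun ω => (X ω - L.mulVec (Y ω)) i) 2 μ := fun i => by
      exact (hXL2 i).sub (hLY i)
    rw [integral_quadform Dm _ hUL, double_sum_eq_trace]
    have hUU : (covMatrix μ (fun ω => X ω - L.mulVec (Y ω))
        (fun ω => X ω - L.mulVec (Y ω)))ᵀ
        = covMatrix μ (fun ω => X ω - L.mulVec (Y ω))
            (fun ω => X ω - L.mulVec (Y ω)) := covMatrix_transpose _ _
    rw [hUU]
    have hcov : covMatrix μ (fun ω => X ω - L.mulVec (Y ω))
        (fun ω => X ω - L.mulVec (Y ω))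
        = covMatrix μ X X - L * (covMatrix μ X Y)ᵀ
          - covMatrix μ X Y * Lᵀ + L * covMatrix μ Y Y * Lᵀ := by
      rw [covMatrix_sub_left X _ _ hXL2 hLY hUL,
        covMatrix_sub_right X X _ hXL2 hXL2 hLY,
        covMatrix_sub_right _ X _ hLY hXL2 hLY,
        covMatrix_mulVec_left L Y X hYL2 hXL2,
        covMatrix_mulVec_right L X Y hXL2 hYL2,
        covMatrix_mulVec_left L Y _ hYL2 hLY,
        covMatrix_mulVec_right L Y Y hYL2 hYL2,
        ← covMatrix_transpose X Y]
      simp only [Matrix.mul_assoc]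
      abel
    rw [hcov]
  simp only [key]
  exact matrix_min_iff D Dm (covMatrix μ X X) (covMatrix μ X Y) (covMatrix μ Y Y)
    hCYYpsd hDmPSD hcomm hD1 hCYYT hDmT K
end

section
/- (Minimal Frobenius norm of the Kalman gain.) Let K̂ = Cov(X,Y) Cov(Y)⁻ and suppose K̂ = D D⁻ K̂. Then among all minimizers K = K̂ + A + B of E‖X − K Y‖²_D (with A Cov(Y) = 0 and D B = 0), K̂ has the smallest Frobenius norm: ‖K̂ + A + B‖²_F = ‖K̂‖²_F + ‖A + B‖²_F ≥ ‖K̂‖²_F, with equality iff A + B = 0. -/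
open Matrix MeasureTheory ProbabilityTheory

/-- Squared Frobenius norm of a matrix. -/
noncomputable def frobSq {p q : ℕ} (M : Matrix (Fin p) (Fin q) ℝ) : ℝ :=
  Matrix.trace (Mᵀ * M)

lemma frobSq_eq_sum {p q : ℕ} (M : Matrix (Fin p) (Fin q) ℝ) :
    frobSq M = ∑ j, ∑ i, (M i j)^2 := by
  simp [frobSq, Matrix.trace, Matrix.mul_apply, Matrix.diag, sq]

lemma frobSq_nonneg {p q : ℕ} (M : Matrix (Fin p) (Fin q) ℝ) :
    0 ≤ frobSq M := by
  rw [frobSq_eq_sum]; positivity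

lemma frobSq_eq_zero {p q : ℕ} (M : Matrix (Fin p) (Fin q) ℝ) :
    frobSq M = 0 ↔ M = 0 := by
  rw [frobSq_eq_sum]
  constructor
  · intro h
    ext i j
    have h1 := (Finset.sum_eq_zero_iff_of_nonneg
      (fun j _ => Finset.sum_nonneg (fun i _ => sq_nonneg (M i j)))).mp h j (Finset.mem_univ j)
    have h2 := (Finset.sum_eq_zero_iff_of_nonneg
      (fun i _ => sq_nonneg (M i j))).mp h1 i (Finset.mem_univ i)
    simpa [sq] using pow_eq_zero_iff (n := 2) (by norm_num) |>.mp h2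
  · rintro rfl; simp

/-- If `K̂ = Cov(X,Y) Cov(Y)⁻` satisfies `K̂ = D D⁻ K̂`, then among
all minimizers `K̂ + A + B` (with `A Cov(Y) = 0`, `D B = 0`), `K̂` has the smallest
Frobenius norm: `‖K̂+A+B‖²_F = ‖K̂‖²_F + ‖A+B‖²_F ≥ ‖K̂‖²_F`, equality iff `A+B = 0`. -/
theorem kalman_gain_min_frobenius {Ω : Type*} [MeasurableSpace Ω]
    (μ : Measure Ω) [IsProbabilityMeasure μ] {p q : ℕ}
    (X : Ω → Fin p → ℝ) (ε : Ω → Fin q → ℝ)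
    (Z : Matrix (Fin q) (Fin p) ℝ)
    (hXmeas : Measurable X) (hεmeas : Measurable ε)
    (hXL2 : ∀ i, MemLp (fun ω => X ω i) 2 μ)
    (hεL2 : ∀ j, MemLp (fun ω => ε ω j) 2 μ)
    (hXmean : ∀ i, ∫ ω, X ω i ∂μ = 0)
    (hεmean : ∀ j, ∫ ω, ε ω j ∂μ = 0)
    (hindep : IndepFun X ε μ)
    (Y : Ω → Fin q → ℝ) (hY : ∀ ω, Y ω = Z.mulVec (X ω) + ε ω)
    (D Dm : Matrix (Fin p) (Fin p) ℝ) (hD : D.PosSemidef)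
    (hD1 : Dm * D * Dm = Dm) (hD2 : D * Dm * D = D)
    (hD3 : (Dm * D)ᵀ = Dm * D) (hD4 : (D * Dm)ᵀ = D * Dm)
    (Cm : Matrix (Fin q) (Fin q) ℝ)
    (hC1 : Cm * covMatrix μ Y Y * Cm = Cm)
    (hC2 : covMatrix μ Y Y * Cm * covMatrix μ Y Y = covMatrix μ Y Y)
    (hC3 : (Cm * covMatrix μ Y Y)ᵀ = Cm * covMatrix μ Y Y)
    (hC4 : (covMatrix μ Y Y * Cm)ᵀ = covMatrix μ Y Y * Cm)
    (hKhat : D * Dm * (covMatrix μ X Y * Cm) = covMatrix μ X Y * Cm) :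
    ∀ A B : Matrix (Fin p) (Fin q) ℝ, A * covMatrix μ Y Y = 0 → D * B = 0 →
      frobSq (covMatrix μ X Y * Cm + A + B)
        = frobSq (covMatrix μ X Y * Cm) + frobSq (A + B) ∧
      frobSq (covMatrix μ X Y * Cm) ≤ frobSq (covMatrix μ X Y * Cm + A + B) ∧
      (frobSq (covMatrix μ X Y * Cm + A + B) = frobSq (covMatrix μ X Y * Cm)
        ↔ A + B = 0) := by
  intro A B hA hB
  set K := covMatrix μ X Y * Cm with hK
  set C := covMatrix μ Y Y with hCdef
  -- D is symmetric
  have hDsym : Dᵀ = D := hD.isHermitian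
  -- Kᵀ * B = 0
  have hKB : Kᵀ * B = 0 := by
    calc Kᵀ * B = (D * Dm * K)ᵀ * B := by rw [hKhat]
    _ = Kᵀ * Dmᵀ * (Dᵀ * B) := by
        rw [transpose_mul, transpose_mul]
        simp [Matrix.mul_assoc]
    _ = Kᵀ * Dmᵀ * (D * B) := by rw [hDsym]
    _ = 0 := by rw [hB, Matrix.mul_zero]
  -- K = K * (C * Cm)
  have hK2 : K = covMatrix μ X Y * Cm * (C * Cm) := by
    conv_rhs => rw [Matrix.mul_assoc, ← Matrix.mul_assoc Cm, hC1]
  have hKA : Matrix.trace (Kᵀ * A) = 0 := by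
    have : Kᵀ * A = (C * Cm) * (Kᵀ * A) := by
      nth_rewrite 1 [hK2]
      rw [transpose_mul, hC4, ← hK, Matrix.mul_assoc]
    rw [this, Matrix.trace_mul_comm, Matrix.mul_assoc Kᵀ A (C * Cm),
      ← Matrix.mul_assoc A C Cm, hA, Matrix.zero_mul, Matrix.mul_zero, Matrix.trace_zero]
  have hcross : Matrix.trace (Kᵀ * (A + B)) = 0 := by
    rw [Matrix.mul_add, Matrix.trace_add, hKA, hKB, Matrix.trace_zero, add_zero]
  have hcross' : Matrix.trace ((A + B)ᵀ * K) = 0 := by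
    rw [← Matrix.trace_transpose, transpose_mul, transpose_transpose]
    exact hcross
  have hmain : frobSq (K + A + B) = frobSq K + frobSq (A + B) := by
    have hKBt : (Kᵀ * B).trace = 0 := by rw [hKB, Matrix.trace_zero]
    have hAK : (Aᵀ * K).trace = 0 := by
      rw [← Matrix.trace_transpose, Matrix.transpose_mul, Matrix.transpose_transpose]
      exact hKA
    have hBK : (Bᵀ * K).trace = 0 := by
      rw [← Matrix.trace_transpose, Matrix.transpose_mul, Matrix.transpose_transpose]
      exact hKBt
    rw [add_assoc K A B]
    unfold frobSq
    simp only [Matrix.transpose_add, Matrix.add_mul, Matrix.mul_add, Matrix.trace_add]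
    rw [hKA, hKBt, hAK, hBK]
    ring
  refine ⟨hmain, ?_, ?_⟩
  · rw [hmain]
    linarith [frobSq_nonneg (A + B)]
  · rw [hmain]
    constructor
    · intro h
      have : frobSq (A + B) = 0 := by linarith
      exact (frobSq_eq_zero _).mp this
    · intro h
      rw [h]
      simp [frobSq_eq_sum]
end

section
/- (Lemma 2(b), 'nothing lost' identity.) Let Σ ∈ ℝ^{p×p} be symmetric positive semidefinite, Z ∈ ℝ^{q×p}, V ∈ ℝ^{q×q} symmetric positive semidefinite, C = Z Σ Zᵀ + V, K = Σ Zᵀ C⁻, and Z^Σ = Σ Zᵀ (Z Σ Zᵀ)⁻. Then Z^Σ Z K = K. -/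
open Matrix

/-- Lemma 2(b), 'nothing lost': With `Σ ⪰ 0`, `V ⪰ 0` symmetric,
`C = Z Σ Zᵀ + V`, `K = Σ Zᵀ C⁻`, `Z^Σ = Σ Zᵀ (Z Σ Zᵀ)⁻` (Moore–Penrose
pseudoinverses), one has `Z^Σ Z K = K`. -/
theorem nothing_lost {p q : ℕ}
    (S : Matrix (Fin p) (Fin p) ℝ) (hS : S.PosSemidef)
    (Z : Matrix (Fin q) (Fin p) ℝ)
    (V : Matrix (Fin q) (Fin q) ℝ) (hV : V.PosSemidef)
    (Bm : Matrix (Fin q) (Fin q) ℝ)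
    (hB1 : Bm * (Z * S * Zᵀ) * Bm = Bm)
    (hB2 : (Z * S * Zᵀ) * Bm * (Z * S * Zᵀ) = Z * S * Zᵀ)
    (hB3 : (Bm * (Z * S * Zᵀ))ᵀ = Bm * (Z * S * Zᵀ))
    (hB4 : ((Z * S * Zᵀ) * Bm)ᵀ = (Z * S * Zᵀ) * Bm)
    (Cm : Matrix (Fin q) (Fin q) ℝ)
    (hC1 : Cm * (Z * S * Zᵀ + V) * Cm = Cm)
    (hC2 : (Z * S * Zᵀ + V) * Cm * (Z * S * Zᵀ + V) = Z * S * Zᵀ + V)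
    (hC3 : (Cm * (Z * S * Zᵀ + V))ᵀ = Cm * (Z * S * Zᵀ + V))
    (hC4 : ((Z * S * Zᵀ + V) * Cm)ᵀ = (Z * S * Zᵀ + V) * Cm) :
    (S * Zᵀ * Bm) * Z * (S * Zᵀ * Cm) = S * Zᵀ * Cm := by
  obtain ⟨R, hRR, hRsym⟩ : ∃ R : Matrix (Fin p) (Fin p) ℝ, R * R = S ∧ Rᴴ = R := by
    open scoped MatrixOrder in
    exact ⟨CFC.sqrt S, CFC.sqrt_mul_sqrt_self S hS.nonneg, (CFC.sqrt_nonneg S).posSemidef.1⟩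
  set W := Z * R with hW
  have hWH : Wᴴ = R * Zᵀ := by
    rw [hW, conjTranspose_mul, hRsym, conjTranspose_eq_transpose_of_trivial]
  have hZSZ : Z * S * Zᵀ = W * Wᴴ := by
    rw [hWH, hW, ← hRR]
    simp only [Matrix.mul_assoc]
  have hSZ : S * Zᵀ = R * Wᴴ := by
    rw [hWH, ← hRR]; simp only [Matrix.mul_assoc]
  -- key: Wᴴ * (Bm * (W * Wᴴ)) = Wᴴ
  have key : Wᴴ * (Bm * (W * Wᴴ)) = Wᴴ := by
    have h0 : (W * Wᴴ) * (Bm * (W * Wᴴ) - 1) = 0 := by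
      have := hB2
      rw [hZSZ] at this
      rw [Matrix.mul_sub, Matrix.mul_one, sub_eq_zero, ← Matrix.mul_assoc, this]
    rw [self_mul_conjTranspose_mul_eq_zero] at h0
    rw [Matrix.mul_sub, Matrix.mul_one, sub_eq_zero] at h0
    exact h0
  have main : S * Zᵀ * Bm * (Z * S * Zᵀ) = S * Zᵀ := by
    rw [hZSZ, hSZ]
    calc R * Wᴴ * Bm * (W * Wᴴ) = R * (Wᴴ * (Bm * (W * Wᴴ))) := by simp only [Matrix.mul_assoc]
      _ = R * Wᴴ := by rw [key]
  calc (S * Zᵀ * Bm) * Z * (S * Zᵀ * Cm)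
      = (S * Zᵀ * Bm * (Z * S * Zᵀ)) * Cm := by simp only [Matrix.mul_assoc]
    _ = S * Zᵀ * Cm := by rw [main]
end

section
/- (Optimal back-transform, Lemma 2(a).) Let X be a mean-zero L² random vector in ℝ^p with Cov(X) = Σ, ε mean-zero L² in ℝ^q independent of X with Cov(ε) = V positive definite, Y = Z X + ε, K = Σ Zᵀ (ZΣZᵀ + V)⁻, and let D ∈ ℝ^{p×p} be positive definite. Then A = Z^Σ := Σ Zᵀ (ZΣZᵀ)⁻ minimizes E‖X − A · (Z K Y)‖²_D over A ∈ ℝ^{p×q}. -/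
open Matrix MeasureTheory ProbabilityTheory
open scoped ENNReal

lemma aux_conjT {m n : Type*} (A : Matrix m n ℝ) : Aᴴ = Aᵀ := by
  ext i j; simp [Matrix.conjTranspose_apply]

lemma aux_integrable_mul {Ω : Type*} [MeasurableSpace Ω] {μ : Measure Ω}
    {f g : Ω → ℝ} (hf : MemLp f 2 μ) (hg : MemLp g 2 μ) :
    Integrable (fun ω => f ω * g ω) μ := by
  have h : (1 : ℝ≥0∞) / 1 = 1 / 2 + 1 / 2 := by
    rw [ENNReal.div_add_div_same, one_add_one_eq_two, ENNReal.div_self (by norm_num) (by norm_num),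
      ENNReal.div_self (by norm_num) (by norm_num)]
  have h2 : MemLp (f • g) 1 μ :=
    hg.smul hf (hpqr := ⟨by simpa only [one_div] using h.symm⟩)
  exact memLp_one_iff_integrable.mp h2

lemma aux_dot_symm {n : Type*} [Fintype n] (M : Matrix n n ℝ) (hM : Mᵀ = M) (u v : n → ℝ) :
    v ⬝ᵥ M.mulVec u = u ⬝ᵥ M.mulVec v := by
  have h : ∀ i j, M i j = M j i := fun i j => by nth_rewrite 1 [← hM]; rfl
  calc v ⬝ᵥ M.mulVec u = ∑ i, ∑ j, v i * (M i j * u j) := by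
        simp [dotProduct, Matrix.mulVec, Finset.mul_sum]
    _ = ∑ i, ∑ j, u j * (M j i * v i) := by
        exact Finset.sum_congr rfl fun i _ => Finset.sum_congr rfl fun j _ => by
          rw [h i j]; ring
    _ = ∑ j, ∑ i, u j * (M j i * v i) := Finset.sum_comm
    _ = u ⬝ᵥ M.mulVec v := by simp [dotProduct, Matrix.mulVec, Finset.mul_sum]

lemma aux_mp_unique {n : Type*} [Fintype n] [DecidableEq n]
    (T B C : Matrix n n ℝ)
    (hB1 : B * T * B = B) (hB2 : T * B * T = T)
    (hB3 : (B * T)ᵀ = B * T) (hB4 : (T * B)ᵀ = T * B)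
    (hC1 : C * T * C = C) (hC2 : T * C * T = T)
    (hC3 : (C * T)ᵀ = C * T) (hC4 : (T * C)ᵀ = T * C) : B = C := by
  have hBT : Bᵀ * Tᵀ = T * B := by rw [← Matrix.transpose_mul]; exact hB4
  have hTB : Tᵀ * Bᵀ = B * T := by rw [← Matrix.transpose_mul]; exact hB3
  have hCT : Cᵀ * Tᵀ = T * C := by rw [← Matrix.transpose_mul]; exact hC4
  have hTC : Tᵀ * Cᵀ = C * T := by rw [← Matrix.transpose_mul]; exact hC3
  have e1 : B = B * (T * C) := by
    calc B = B * (T * B) := by rw [← Matrix.mul_assoc, hB1]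
      _ = B * (Bᵀ * Tᵀ) := by rw [hBT]
      _ = B * (Bᵀ * (T * C * T)ᵀ) := by rw [hC2]
      _ = B * (Bᵀ * (Tᵀ * (T * C)ᵀ)) := by rw [Matrix.transpose_mul (T * C) T]
      _ = B * (Bᵀ * (Tᵀ * (T * C))) := by rw [hC4]
      _ = (B * (Bᵀ * Tᵀ)) * (T * C) := by simp only [Matrix.mul_assoc]
      _ = (B * (T * B)) * (T * C) := by rw [hBT]
      _ = B * (T * C) := by rw [← Matrix.mul_assoc B T B, hB1]
  have e2 : C = B * (T * C) := by
    calc C = (C * T) * C := by rw [hC1]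
      _ = (C * T)ᵀ * C := by rw [hC3]
      _ = (Tᵀ * Cᵀ) * C := by rw [Matrix.transpose_mul]
      _ = ((T * B * T)ᵀ * Cᵀ) * C := by rw [hB2]
      _ = ((Tᵀ * (T * B)ᵀ) * Cᵀ) * C := by rw [Matrix.transpose_mul (T * B) T]
      _ = ((Tᵀ * (Bᵀ * Tᵀ)) * Cᵀ) * C := by rw [Matrix.transpose_mul T B]
      _ = (Tᵀ * Bᵀ) * ((Tᵀ * Cᵀ) * C) := by simp only [Matrix.mul_assoc]
      _ = (B * T) * ((C * T) * C) := by rw [hTB, hTC]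
      _ = (B * T) * C := by rw [hC1]
      _ = B * (T * C) := by rw [Matrix.mul_assoc]
  exact e1.trans e2.symm

/-- Lemma 2(a), optimal back-transform: `A = Z^Σ = Σ Zᵀ (ZΣZᵀ)⁻`
minimizes `E‖X − A (Z K Y)‖²_D` over all `A`, where `K = ΣZᵀ(ZΣZᵀ+V)⁻`,
`D` positive definite and `‖x‖²_D = xᵀ D⁻¹ x`. -/
theorem optimal_back_transform {Ω : Type*} [MeasurableSpace Ω]
    (μ : Measure Ω) [IsProbabilityMeasure μ] {p q : ℕ}
    (X : Ω → Fin p → ℝ) (ε : Ω → Fin q → ℝ)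
    (Z : Matrix (Fin q) (Fin p) ℝ)
    (S : Matrix (Fin p) (Fin p) ℝ) (hS : S.PosSemidef)
    (V : Matrix (Fin q) (Fin q) ℝ) (hV : V.PosDef)
    (hXmeas : Measurable X) (hεmeas : Measurable ε)
    (hXL2 : ∀ i, MemLp (fun ω => X ω i) 2 μ)
    (hεL2 : ∀ j, MemLp (fun ω => ε ω j) 2 μ)
    (hXmean : ∀ i, ∫ ω, X ω i ∂μ = 0)
    (hεmean : ∀ j, ∫ ω, ε ω j ∂μ = 0)
    (hindep : IndepFun X ε μ)
    (hCovX : covMatrix μ X X = S)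
    (hCovε : covMatrix μ ε ε = V)
    (Y : Ω → Fin q → ℝ) (hY : ∀ ω, Y ω = Z.mulVec (X ω) + ε ω)
    (D : Matrix (Fin p) (Fin p) ℝ) (hD : D.PosDef)
    (Bm : Matrix (Fin q) (Fin q) ℝ)
    (hB1 : Bm * (Z * S * Zᵀ) * Bm = Bm)
    (hB2 : (Z * S * Zᵀ) * Bm * (Z * S * Zᵀ) = Z * S * Zᵀ)
    (hB3 : (Bm * (Z * S * Zᵀ))ᵀ = Bm * (Z * S * Zᵀ))
    (hB4 : ((Z * S * Zᵀ) * Bm)ᵀ = (Z * S * Zᵀ) * Bm)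
    (Cm : Matrix (Fin q) (Fin q) ℝ)
    (hC1 : Cm * (Z * S * Zᵀ + V) * Cm = Cm)
    (hC2 : (Z * S * Zᵀ + V) * Cm * (Z * S * Zᵀ + V) = Z * S * Zᵀ + V)
    (hC3 : (Cm * (Z * S * Zᵀ + V))ᵀ = Cm * (Z * S * Zᵀ + V))
    (hC4 : ((Z * S * Zᵀ + V) * Cm)ᵀ = (Z * S * Zᵀ + V) * Cm) :
    ∀ A : Matrix (Fin p) (Fin q) ℝ,
      (∫ ω, (X ω - (S * Zᵀ * Bm).mulVec ((Z * (S * Zᵀ * Cm)).mulVec (Y ω))) ⬝ᵥ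
          D⁻¹.mulVec
            (X ω - (S * Zᵀ * Bm).mulVec ((Z * (S * Zᵀ * Cm)).mulVec (Y ω))) ∂μ) ≤
      ∫ ω, (X ω - A.mulVec ((Z * (S * Zᵀ * Cm)).mulVec (Y ω))) ⬝ᵥ
          D⁻¹.mulVec
            (X ω - A.mulVec ((Z * (S * Zᵀ * Cm)).mulVec (Y ω))) ∂μ := by
  intro A
  classical
  have hSsym : Sᵀ = S := by rw [← aux_conjT]; exact hS.1
  have hVsym : Vᵀ = V := by rw [← aux_conjT]; exact hV.1
  have hDsym : Dᵀ = D := by rw [← aux_conjT]; exact hD.1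
  have hDinv : (D⁻¹).PosDef := hD.inv
  have hDinvsym : (D⁻¹)ᵀ = D⁻¹ := by rw [Matrix.transpose_nonsing_inv, hDsym]
  set G := Z * S * Zᵀ with hG
  set TT := G + V with hTT
  have hGsym : Gᵀ = G := by
    rw [hG]
    simp [Matrix.transpose_mul, Matrix.transpose_transpose, hSsym, Matrix.mul_assoc]
  have hTTsym : TTᵀ = TT := by rw [hTT, Matrix.transpose_add, hGsym, hVsym]
  -- symmetry of Cm
  have hc : Cmᵀ * TT = TT * Cm := by
    calc Cmᵀ * TT = Cmᵀ * TTᵀ := by rw [hTTsym]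
      _ = (TT * Cm)ᵀ := (Matrix.transpose_mul TT Cm).symm
      _ = TT * Cm := hC4
  have hc2 : TT * Cmᵀ = Cm * TT := by
    calc TT * Cmᵀ = TTᵀ * Cmᵀ := by rw [hTTsym]
      _ = (Cm * TT)ᵀ := (Matrix.transpose_mul Cm TT).symm
      _ = Cm * TT := hC3
  have hC1' : Cmᵀ * TT * Cmᵀ = Cmᵀ := by
    have h := congrArg Matrix.transpose hC1
    simpa [Matrix.transpose_mul, hTTsym, Matrix.mul_assoc] using h
  have hC2' : TT * Cmᵀ * TT = TT := by
    have h := congrArg Matrix.transpose hC2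
    simpa [Matrix.transpose_mul, hTTsym, Matrix.mul_assoc] using h
  have hC3' : (Cmᵀ * TT)ᵀ = Cmᵀ * TT := by rw [hc]; exact hC4
  have hC4' : (TT * Cmᵀ)ᵀ = TT * Cmᵀ := by rw [hc2]; exact hC3
  have hCmsym : Cmᵀ = Cm :=
    (aux_mp_unique TT Cm Cmᵀ hC1 hC2 hC3 hC4 hC1' hC2' hC3' hC4').symm
  -- key identity S Zᵀ Bm G = S Zᵀ
  obtain ⟨B0, hB0⟩ : ∃ B0 : Matrix (Fin p) (Fin p) ℝ, S = B0ᴴ * B0 := by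
    open scoped MatrixOrder Matrix.Norms.L2Operator in
    obtain ⟨B, hB⟩ := CStarAlgebra.nonneg_iff_eq_star_mul_self.mp hS.nonneg
    exact ⟨B, hB⟩
  have hB0' : S = B0ᵀ * B0 := by rw [hB0, aux_conjT]
  have hGQ : G * (Bm * G) = G := by rw [← Matrix.mul_assoc]; exact hB2
  have hG1Q : G * (1 - Bm * G) = 0 := by
    rw [Matrix.mul_sub, Matrix.mul_one, hGQ, sub_self]
  have hNN : (B0 * Zᵀ * (1 - Bm * G))ᵀ * (B0 * Zᵀ * (1 - Bm * G))
      = (1 - Bm * G)ᵀ * (G * (1 - Bm * G)) := by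
    rw [hG, hB0']
    simp only [Matrix.transpose_mul, Matrix.transpose_transpose, Matrix.mul_assoc]
  have hN0 : B0 * Zᵀ * (1 - Bm * G) = 0 := by
    rw [hG1Q, Matrix.mul_zero] at hNN
    exact Matrix.conjTranspose_mul_self_eq_zero.mp (by rw [aux_conjT]; exact hNN)
  have hKey : S * Zᵀ * (Bm * G) = S * Zᵀ := by
    have h6 : S * (Zᵀ * (1 - Bm * G)) = 0 := by
      have e : S * (Zᵀ * (1 - Bm * G)) = B0ᵀ * (B0 * Zᵀ * (1 - Bm * G)) := by
        rw [hB0']; simp only [Matrix.mul_assoc]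
      rw [e, hN0, Matrix.mul_zero]
    rw [Matrix.mul_sub, Matrix.mul_one, Matrix.mul_sub, sub_eq_zero] at h6
    rw [Matrix.mul_assoc]; exact h6.symm
  -- block matrices
  set Px := Matrix.fromCols (1 : Matrix (Fin p) (Fin p) ℝ)
      (0 : Matrix (Fin p) (Fin q) ℝ) with hPx
  set Py := Matrix.fromCols Z (1 : Matrix (Fin q) (Fin q) ℝ) with hPy
  set Cmat := Matrix.fromBlocks S (0 : Matrix (Fin p) (Fin q) ℝ)
      (0 : Matrix (Fin q) (Fin p) ℝ) V with hCmat
  set M := Z * (S * Zᵀ * Cm) with hM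
  set MP := M * Py with hMP
  set A0 : Matrix (Fin p) (Fin q) ℝ := S * Zᵀ * Bm with hA0
  have hMGC : M = G * Cm := by rw [hM, hG]; simp only [Matrix.mul_assoc]
  have hPxC : Px * Cmat = Matrix.fromCols S (0 : Matrix (Fin p) (Fin q) ℝ) := by
    rw [hPx, hCmat, Matrix.fromCols_mul_fromBlocks]
    simp
  have hPyC : Py * Cmat = Matrix.fromCols (Z * S) V := by
    rw [hPy, hCmat, Matrix.fromCols_mul_fromBlocks]
    simp
  have hPxCPy : Px * Cmat * Pyᵀ = S * Zᵀ := by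
    rw [hPxC, hPy, Matrix.transpose_fromCols, Matrix.transpose_one,
      Matrix.fromCols_mul_fromRows]
    simp
  have hPyCPy : Py * Cmat * Pyᵀ = TT := by
    rw [hPyC, hPy, Matrix.transpose_fromCols, Matrix.transpose_one,
      Matrix.fromCols_mul_fromRows, hTT, hG]
    simp [Matrix.mul_assoc]
  have hMt : MPᵀ = Pyᵀ * Mᵀ := by rw [hMP, Matrix.transpose_mul]
  have hMsymT : Mᵀ = Cm * G := by rw [hMGC, Matrix.transpose_mul, hGsym, hCmsym]
  have hMain : Px * Cmat * MPᵀ = A0 * (MP * Cmat * MPᵀ) := by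
    have h1 : Px * Cmat * MPᵀ = S * Zᵀ * (Cm * G) := by
      rw [hMt, ← Matrix.mul_assoc, hPxCPy, hMsymT]
    have h2 : MP * Cmat * MPᵀ = G * Cm * G := by
      rw [hMt, hMP]
      calc M * Py * Cmat * (Pyᵀ * Mᵀ) = M * (Py * Cmat * Pyᵀ) * Mᵀ := by
            simp only [Matrix.mul_assoc]
        _ = M * TT * Mᵀ := by rw [hPyCPy]
        _ = G * Cm * TT * (Cm * G) := by rw [hMsymT, hMGC]
        _ = G * (Cm * TT * Cm) * G := by simp only [Matrix.mul_assoc]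
        _ = G * Cm * G := by rw [hC1]
    rw [h1, h2, hA0]
    calc S * Zᵀ * (Cm * G) = (S * Zᵀ * (Bm * G)) * (Cm * G) := by rw [hKey]
      _ = S * Zᵀ * Bm * (G * Cm * G) := by simp only [Matrix.mul_assoc]
  -- the random vector T
  set T : Ω → (Fin p ⊕ Fin q) → ℝ := fun ω => Sum.elim (X ω) (ε ω) with hTdef
  have hT2 : ∀ a, MemLp (fun ω => T ω a) 2 μ := by
    rintro (i | j)
    · exact hXL2 i
    · exact hεL2 j
  have hTint : ∀ a b, Integrable (fun ω => T ω a * T ω b) μ :=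
    fun a b => aux_integrable_mul (hT2 a) (hT2 b)
  have hXX : ∀ i j, (∫ ω, X ω i * X ω j ∂μ) = S i j := fun i j => by
    rw [← hCovX]; rfl
  have hεε : ∀ i j, (∫ ω, ε ω i * ε ω j ∂μ) = V i j := fun i j => by
    rw [← hCovε]; rfl
  have hXε : ∀ i j, (∫ ω, X ω i * ε ω j ∂μ) = 0 := fun i j => by
    have h := (hindep.comp (measurable_pi_apply i) (measurable_pi_apply j)).integral_mul_eq_mul_integral
      (hXL2 i).aestronglyMeasurable (hεL2 j).aestronglyMeasurable
    have h2 : (∫ ω, X ω i * ε ω j ∂μ) = (∫ ω, X ω i ∂μ) * ∫ ω, ε ω j ∂μ := h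
    rw [h2, hXmean i, zero_mul]
  have hεX : ∀ i j, (∫ ω, ε ω i * X ω j ∂μ) = 0 := fun i j => by
    calc (∫ ω, ε ω i * X ω j ∂μ) = ∫ ω, X ω j * ε ω i ∂μ := by
          apply integral_congr_ae; filter_upwards with ω; ring
      _ = 0 := hXε j i
  have hTC : ∀ a b, (∫ ω, T ω a * T ω b ∂μ) = Cmat a b := by
    rintro (i | i) (j | j)
    · rw [hCmat]; simp only [Matrix.fromBlocks_apply₁₁]; exact hXX i j
    · rw [hCmat]; simp only [Matrix.fromBlocks_apply₁₂, Matrix.zero_apply]; exact hXε i j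
    · rw [hCmat]; simp only [Matrix.fromBlocks_apply₂₁, Matrix.zero_apply]; exact hεX i j
    · rw [hCmat]; simp only [Matrix.fromBlocks_apply₂₂]; exact hεε i j
  -- bilinear expansion
  have key_expand : ∀ (R R' : Matrix (Fin p) (Fin p ⊕ Fin q) ℝ) (i j : Fin p),
      (fun ω => R.mulVec (T ω) i * R'.mulVec (T ω) j)
        = fun ω => ∑ a, ∑ b, R i a * R' j b * (T ω a * T ω b) := by
    intro R R' i j
    funext ω
    show ((fun a => R i a) ⬝ᵥ T ω) * ((fun b => R' j b) ⬝ᵥ T ω) = _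
    rw [dotProduct, dotProduct, Finset.sum_mul_sum]
    exact Finset.sum_congr rfl fun a _ => Finset.sum_congr rfl fun b _ =>
      mul_mul_mul_comm _ _ _ _
  have key_int : ∀ (R R' : Matrix (Fin p) (Fin p ⊕ Fin q) ℝ) (i j : Fin p),
      Integrable (fun ω => R.mulVec (T ω) i * R'.mulVec (T ω) j) μ := by
    intro R R' i j
    rw [key_expand R R' i j]
    exact integrable_finset_sum _ fun a _ => integrable_finset_sum _ fun b _ =>
      (hTint a b).const_mul _
  have key_val : ∀ (R R' : Matrix (Fin p) (Fin p ⊕ Fin q) ℝ) (i j : Fin p),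
      (∫ ω, R.mulVec (T ω) i * R'.mulVec (T ω) j ∂μ) = (R * Cmat * R'ᵀ) i j := by
    intro R R' i j
    rw [key_expand R R' i j]
    rw [integral_finset_sum _ (fun a _ => integrable_finset_sum _ fun b _ =>
      (hTint a b).const_mul _)]
    have h7 : ∀ a : Fin p ⊕ Fin q, (∫ ω, ∑ b, R i a * R' j b * (T ω a * T ω b) ∂μ)
        = ∑ b, R i a * R' j b * Cmat a b := by
      intro a
      rw [integral_finset_sum _ (fun b _ => (hTint a b).const_mul _)]
      exact Finset.sum_congr rfl fun b _ => by rw [integral_const_mul, hTC a b]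
    calc ∑ a, ∫ ω, (∑ b, R i a * R' j b * (T ω a * T ω b)) ∂μ
        = ∑ a, ∑ b, R i a * R' j b * Cmat a b := Finset.sum_congr rfl fun a _ => h7 a
      _ = (R * Cmat * R'ᵀ) i j := by
          rw [Finset.sum_comm]
          simp only [Matrix.mul_apply, Matrix.transpose_apply, Finset.sum_mul]
          exact Finset.sum_congr rfl fun b _ => Finset.sum_congr rfl fun a _ => by ring
  have qf_expand : ∀ (R R' : Matrix (Fin p) (Fin p ⊕ Fin q) ℝ) (ω : Ω),
      R.mulVec (T ω) ⬝ᵥ D⁻¹.mulVec (R'.mulVec (T ω))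
        = ∑ i, ∑ j, D⁻¹ i j * (R.mulVec (T ω) i * R'.mulVec (T ω) j) := by
    intro R R' ω
    rw [dotProduct]
    refine Finset.sum_congr rfl fun i _ => ?_
    show R.mulVec (T ω) i * ((fun j => D⁻¹ i j) ⬝ᵥ R'.mulVec (T ω)) = _
    rw [dotProduct, Finset.mul_sum]
    exact Finset.sum_congr rfl fun j _ => by ring
  have qf_int : ∀ (R R' : Matrix (Fin p) (Fin p ⊕ Fin q) ℝ),
      Integrable (fun ω => R.mulVec (T ω) ⬝ᵥ D⁻¹.mulVec (R'.mulVec (T ω))) μ := by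
    intro R R'
    have h8 : (fun ω => R.mulVec (T ω) ⬝ᵥ D⁻¹.mulVec (R'.mulVec (T ω)))
        = fun ω => ∑ i, ∑ j, D⁻¹ i j * (R.mulVec (T ω) i * R'.mulVec (T ω) j) :=
      funext (qf_expand R R')
    rw [h8]
    exact integrable_finset_sum _ fun i _ => integrable_finset_sum _ fun j _ =>
      (key_int R R' i j).const_mul _
  have qf_val : ∀ (R R' : Matrix (Fin p) (Fin p ⊕ Fin q) ℝ),
      (∫ ω, R.mulVec (T ω) ⬝ᵥ D⁻¹.mulVec (R'.mulVec (T ω)) ∂μ)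
        = ∑ i, ∑ j, D⁻¹ i j * (R * Cmat * R'ᵀ) i j := by
    intro R R'
    have h8 : (fun ω => R.mulVec (T ω) ⬝ᵥ D⁻¹.mulVec (R'.mulVec (T ω)))
        = fun ω => ∑ i, ∑ j, D⁻¹ i j * (R.mulVec (T ω) i * R'.mulVec (T ω) j) :=
      funext (qf_expand R R')
    rw [h8]
    refine (integral_finset_sum _ (fun i _ => integrable_finset_sum _ fun j _ =>
      (key_int R R' i j).const_mul _)).trans ?_
    refine Finset.sum_congr rfl fun i _ => ?_
    refine (integral_finset_sum _ (fun j _ => (key_int R R' i j).const_mul _)).trans ?_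
    exact Finset.sum_congr rfl fun j _ => by rw [integral_const_mul, key_val R R' i j]
  -- representation of the residual
  have hTrep : ∀ (A' : Matrix (Fin p) (Fin q) ℝ) (ω : Ω),
      X ω - A'.mulVec (M.mulVec (Y ω)) = (Px - A' * MP).mulVec (T ω) := by
    intro A' ω
    have hXrep : Px.mulVec (T ω) = X ω := by
      simp only [hPx, hTdef, Matrix.fromCols_mulVec_sumElim, Matrix.one_mulVec,
        Matrix.zero_mulVec, add_zero]
    have hYrep : Py.mulVec (T ω) = Y ω := by
      rw [hY ω]
      simp only [hPy, hTdef, Matrix.fromCols_mulVec_sumElim, Matrix.one_mulVec]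
    rw [← hXrep, ← hYrep, Matrix.mulVec_mulVec, Matrix.mulVec_mulVec, Matrix.sub_mulVec, hMP,
      Matrix.mul_assoc]
  -- residual matrices
  set R0 := Px - A0 * MP with hR0
  set RE := (A0 - A) * MP with hRE
  have hRA : Px - A * MP = R0 + RE := by rw [hR0, hRE, Matrix.sub_mul]; abel
  have hcross : R0 * Cmat * REᵀ = 0 := by
    rw [hR0, hRE]
    have h0 : (Px - A0 * MP) * Cmat * MPᵀ = 0 := by
      rw [Matrix.sub_mul, Matrix.sub_mul, sub_eq_zero, hMain]
      simp only [Matrix.mul_assoc]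
    calc (Px - A0 * MP) * Cmat * ((A0 - A) * MP)ᵀ
        = ((Px - A0 * MP) * Cmat * MPᵀ) * (A0 - A)ᵀ := by
          rw [Matrix.transpose_mul]; simp only [Matrix.mul_assoc]
      _ = 0 := by rw [h0, Matrix.zero_mul]
  -- rewrite the goal
  simp only [hTrep, hRA, ← hR0]
  have hsym : ∀ ω, RE.mulVec (T ω) ⬝ᵥ D⁻¹.mulVec (R0.mulVec (T ω))
      = R0.mulVec (T ω) ⬝ᵥ D⁻¹.mulVec (RE.mulVec (T ω)) := fun ω =>
    aux_dot_symm D⁻¹ hDinvsym _ _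
  have hexp : ∀ ω, (R0 + RE).mulVec (T ω) ⬝ᵥ D⁻¹.mulVec ((R0 + RE).mulVec (T ω))
      = R0.mulVec (T ω) ⬝ᵥ D⁻¹.mulVec (R0.mulVec (T ω))
        + ((2:ℝ) * (R0.mulVec (T ω) ⬝ᵥ D⁻¹.mulVec (RE.mulVec (T ω)))
           + RE.mulVec (T ω) ⬝ᵥ D⁻¹.mulVec (RE.mulVec (T ω))) := by
    intro ω
    rw [Matrix.add_mulVec, Matrix.mulVec_add, dotProduct_add, add_dotProduct, add_dotProduct,
      hsym ω]
    ring
  have hint2 : Integrable (fun ω =>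
      (2:ℝ) * (R0.mulVec (T ω) ⬝ᵥ D⁻¹.mulVec (RE.mulVec (T ω)))
        + RE.mulVec (T ω) ⬝ᵥ D⁻¹.mulVec (RE.mulVec (T ω))) μ :=
    ((qf_int R0 RE).const_mul 2).add (qf_int RE RE)
  have hc0 : (∫ ω, R0.mulVec (T ω) ⬝ᵥ D⁻¹.mulVec (RE.mulVec (T ω)) ∂μ) = 0 := by
    rw [qf_val R0 RE, hcross]
    simp
  have hqE : 0 ≤ ∫ ω, RE.mulVec (T ω) ⬝ᵥ D⁻¹.mulVec (RE.mulVec (T ω)) ∂μ := by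
    apply integral_nonneg
    intro ω
    have h9 := hDinv.posSemidef.dotProduct_mulVec_nonneg (RE.mulVec (T ω))
    simpa using h9
  have hsplit : (∫ ω, (R0 + RE).mulVec (T ω) ⬝ᵥ D⁻¹.mulVec ((R0 + RE).mulVec (T ω)) ∂μ)
      = (∫ ω, R0.mulVec (T ω) ⬝ᵥ D⁻¹.mulVec (R0.mulVec (T ω)) ∂μ)
        + ((2:ℝ) * (∫ ω, R0.mulVec (T ω) ⬝ᵥ D⁻¹.mulVec (RE.mulVec (T ω)) ∂μ)
           + ∫ ω, RE.mulVec (T ω) ⬝ᵥ D⁻¹.mulVec (RE.mulVec (T ω)) ∂μ) := by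
    have h10 : (∫ ω, (R0 + RE).mulVec (T ω) ⬝ᵥ D⁻¹.mulVec ((R0 + RE).mulVec (T ω)) ∂μ)
        = (∫ ω, R0.mulVec (T ω) ⬝ᵥ D⁻¹.mulVec (R0.mulVec (T ω)) ∂μ)
          + ∫ ω, ((2:ℝ) * (R0.mulVec (T ω) ⬝ᵥ D⁻¹.mulVec (RE.mulVec (T ω)))
             + RE.mulVec (T ω) ⬝ᵥ D⁻¹.mulVec (RE.mulVec (T ω))) ∂μ := by
      rw [← integral_add (qf_int R0 R0) hint2]
      exact integral_congr_ae (Filter.Eventually.of_forall fun ω => hexp ω)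
    rw [h10, integral_add ((qf_int R0 RE).const_mul 2) (qf_int RE RE), integral_const_mul]
  rw [hsplit, hc0]
  linarith [hqE]
end

section
/- (Corollary: recovery of the state projection from the error projection.) With Y = Z X + ε as above, K = Σ Zᵀ C⁻, C = Z Σ Zᵀ + V, and Z^Σ = Σ Zᵀ (Z Σ Zᵀ)⁻, the best linear reconstruction of X from Y satisfies K Y = Z^Σ (Y − (I_q − Z K) Y). Equivalently, oP(X|Y) = Z^Σ (Y − oP(ε|Y)), regardless of the ranks of Z or Z Σ Zᵀ. -/
open Matrix

/-- Auxiliary: if `M * Mᵀ * W = 0` then `Mᵀ * W = 0` (real matrices). -/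
lemma aux_cancel {m n k : ℕ} (M : Matrix (Fin m) (Fin n) ℝ)
    (W : Matrix (Fin m) (Fin k) ℝ) (h : M * Mᵀ * W = 0) : Mᵀ * W = 0 := by
  have h2 : (Mᵀ * W)ᴴ * (Mᵀ * W) = 0 := by
    rw [conjTranspose_eq_transpose_of_trivial, transpose_mul, transpose_transpose]
    calc Wᵀ * M * (Mᵀ * W) = Wᵀ * (M * Mᵀ * W) := by
          simp only [Matrix.mul_assoc]
      _ = 0 := by rw [h, Matrix.mul_zero]
  exact conjTranspose_mul_self_eq_zero.mp h2

/-- Corollary: With `C = Z Σ Zᵀ + V`, `K = Σ Zᵀ C⁻`, and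
`Z^Σ = Σ Zᵀ (Z Σ Zᵀ)⁻` (Moore–Penrose pseudoinverses), the best linear
reconstruction of the state satisfies `K y = Z^Σ (y − (I − Z K) y)` for every
`y`, i.e. `oP(X|Y) = Z^Σ (Y − oP(ε|Y))`, regardless of the ranks of `Z` or `ZΣZᵀ`. -/
theorem recover_state_from_error_projection {p q : ℕ}
    (S : Matrix (Fin p) (Fin p) ℝ) (hS : S.PosSemidef)
    (Z : Matrix (Fin q) (Fin p) ℝ)
    (V : Matrix (Fin q) (Fin q) ℝ) (hV : V.PosSemidef)
    (Bm : Matrix (Fin q) (Fin q) ℝ)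
    (hB1 : Bm * (Z * S * Zᵀ) * Bm = Bm)
    (hB2 : (Z * S * Zᵀ) * Bm * (Z * S * Zᵀ) = Z * S * Zᵀ)
    (hB3 : (Bm * (Z * S * Zᵀ))ᵀ = Bm * (Z * S * Zᵀ))
    (hB4 : ((Z * S * Zᵀ) * Bm)ᵀ = (Z * S * Zᵀ) * Bm)
    (Cm : Matrix (Fin q) (Fin q) ℝ)
    (hC1 : Cm * (Z * S * Zᵀ + V) * Cm = Cm)
    (hC2 : (Z * S * Zᵀ + V) * Cm * (Z * S * Zᵀ + V) = Z * S * Zᵀ + V)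
    (hC3 : (Cm * (Z * S * Zᵀ + V))ᵀ = Cm * (Z * S * Zᵀ + V))
    (hC4 : ((Z * S * Zᵀ + V) * Cm)ᵀ = (Z * S * Zᵀ + V) * Cm) :
    ∀ y : Fin q → ℝ,
      (S * Zᵀ * Cm).mulVec y
        = (S * Zᵀ * Bm).mulVec (y - ((1 : Matrix (Fin q) (Fin q) ℝ)
            - Z * (S * Zᵀ * Cm)).mulVec y) := by
  obtain ⟨L, hLsa, -, hLL⟩ := CFC.exists_sqrt_of_isSelfAdjoint_of_quasispectrumRestricts
    hS.isHermitian (open scoped MatrixOrder in QuasispectrumRestricts.nnreal_of_nonneg hS.nonneg)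
  have hLsym : Lᵀ = L := by rw [← conjTranspose_eq_transpose_of_trivial]; exact hLsa
  set M := Z * L with hMdef
  have hA : Z * S * Zᵀ = M * Mᵀ := by
    rw [hMdef, transpose_mul, hLsym, ← hLL]; simp only [Matrix.mul_assoc]
  -- key cancellation: Mᵀ * (Bm * (M * Mᵀ)) = Mᵀ
  have hzero : M * Mᵀ * (Bm * (M * Mᵀ) - 1) = 0 := by
    have := hB2
    rw [hA] at this
    rw [Matrix.mul_sub, Matrix.mul_one, sub_eq_zero, ← Matrix.mul_assoc,
      ← Matrix.mul_assoc]
    rw [← Matrix.mul_assoc] at this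
    exact this
  have hkey : Mᵀ * (Bm * (M * Mᵀ)) = Mᵀ := by
    have := aux_cancel M _ hzero
    rw [Matrix.mul_sub, Matrix.mul_one, sub_eq_zero] at this
    exact this
  -- hence S Zᵀ Bm (Z S Zᵀ) = S Zᵀ
  have hSZ : S * Zᵀ * Bm * (Z * S * Zᵀ) = S * Zᵀ := by
    have hSZM : S * Zᵀ = L * Mᵀ := by
      rw [hMdef, transpose_mul, hLsym, ← hLL]; simp only [Matrix.mul_assoc]
    rw [hA, hSZM]
    calc L * Mᵀ * Bm * (M * Mᵀ) = L * (Mᵀ * (Bm * (M * Mᵀ))) := by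
          simp only [Matrix.mul_assoc]
      _ = L * Mᵀ := by rw [hkey]
  -- the matrix identity
  have hmat : S * Zᵀ * Bm * (Z * (S * Zᵀ * Cm)) = S * Zᵀ * Cm := by
    calc S * Zᵀ * Bm * (Z * (S * Zᵀ * Cm))
        = (S * Zᵀ * Bm * (Z * S * Zᵀ)) * Cm := by simp only [Matrix.mul_assoc]
      _ = S * Zᵀ * Cm := by rw [hSZ]
  intro y
  rw [Matrix.sub_mulVec, Matrix.one_mulVec]
  have : y - (y - (Z * (S * Zᵀ * Cm)).mulVec y) = (Z * (S * Zᵀ * Cm)).mulVec y := by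
    abel
  rw [this, Matrix.mulVec_mulVec, hmat]
end

section
/- (Bounded risk of rLS.IO under IO contamination, Proposition A.6.) Let Σ ⪰ 0, Z ∈ ℝ^{q×p}, V = Cov(ε) with ε a mean-zero L² random vector in ℝ^q, C = ZΣZᵀ + V, K = ΣZᵀC⁻, Z^Σ = ΣZᵀ(ZΣZᵀ)⁻, b > 0, and H_b(y) = y·min{1, b/|y|} the Huber clipping function. Define the semi-norm matrix D⁻ = (Z^Σ Z)ᵀ Σ⁻ (Z^Σ Z) with B = ZΣZᵀ. Then for ANY random vector X in ℝ^p (arbitrarily contaminated), the reconstruction error e = X − Z^Σ(Y − H_b(Y − ZKY)) with Y = ZX + ε satisfies eᵀ D⁻ e ≤ 2 εᵀ B⁻ ε + 2 H_b((I_q−ZK)Y)ᵀ B⁻ H_b((I_q−ZK)Y), and hence E[eᵀD⁻e] ≤ 2 tr(B⁻(V + b² I_q)). -/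
open Matrix MeasureTheory

/-- Huber clipping function on `ℝ^q` (Euclidean norm): `H_b(y) = y · min{1, b/|y|}`. -/
noncomputable def huber {q : ℕ} (b : ℝ) (y : Fin q → ℝ) : Fin q → ℝ :=
  (min 1 (b / Real.sqrt (y ⬝ᵥ y))) • y

/-- Uniqueness of the Moore–Penrose inverse. -/
lemma penrose_unique {m : Type*} [Fintype m] [DecidableEq m]
    {B X Y : Matrix m m ℝ}
    (hX1 : X * B * X = X) (hX2 : B * X * B = B) (hX3 : (X * B)ᵀ = X * B) (hX4 : (B * X)ᵀ = B * X)
    (hY1 : Y * B * Y = Y) (hY2 : B * Y * B = B) (hY3 : (Y * B)ᵀ = Y * B) (hY4 : (B * Y)ᵀ = B * Y) :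
    X = Y := by
  have left : ∀ {U W : Matrix m m ℝ}, U * B * U = U → (U * B)ᵀ = U * B →
      B * W * B = B → (W * B)ᵀ = W * B → B * U * B = B → U = W * B * U := by
    intro U W hU1 hU3 hW2 hW3 hU2
    calc U = U * B * U := hU1.symm
      _ = U * (B * W * B) * U := by rw [hW2]
      _ = ((U * B) * (W * B)) * U := by simp only [Matrix.mul_assoc]
      _ = ((U * B)ᵀ * (W * B)ᵀ) * U := by rw [hU3, hW3]
      _ = ((W * B) * (U * B))ᵀ * U := by simp only [Matrix.transpose_mul, Matrix.mul_assoc]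
      _ = (W * (B * U * B))ᵀ * U := by simp only [Matrix.mul_assoc]
      _ = (W * B)ᵀ * U := by rw [hU2]
      _ = W * B * U := by rw [hW3]
  have right : X = X * B * Y := by
    calc X = X * B * X := hX1.symm
      _ = X * (B * Y * B) * X := by rw [hY2]
      _ = X * ((B * Y) * (B * X)) := by simp only [Matrix.mul_assoc]
      _ = X * ((B * Y)ᵀ * (B * X)ᵀ) := by rw [hX4, hY4]
      _ = X * ((B * X) * (B * Y))ᵀ := by simp only [Matrix.transpose_mul, Matrix.mul_assoc]
      _ = X * ((B * X * B) * Y)ᵀ := by simp only [Matrix.mul_assoc]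
      _ = X * (B * Y)ᵀ := by rw [hX2]
      _ = X * (B * Y) := by rw [hY4]
      _ = X * B * Y := by rw [Matrix.mul_assoc]
  have hswap : Y = X * B * Y := left hY1 hY3 hX2 hX3 hY2
  rw [right, ← hswap]

/-- A Moore–Penrose inverse of a symmetric matrix is symmetric. -/
lemma penrose_symm {m : Type*} [Fintype m] [DecidableEq m]
    {B Bm : Matrix m m ℝ} (hB : Bᵀ = B)
    (h1 : Bm * B * Bm = Bm) (h2 : B * Bm * B = B)
    (h3 : (Bm * B)ᵀ = Bm * B) (h4 : (B * Bm)ᵀ = B * Bm) :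
    Bmᵀ = Bm := by
  apply penrose_unique (B := B) (X := Bmᵀ) (Y := Bm) ?_ ?_ ?_ ?_ h1 h2 h3 h4
  · have := congrArg Matrix.transpose h1
    simpa [Matrix.transpose_mul, hB, Matrix.mul_assoc] using this
  · have := congrArg Matrix.transpose h2
    simpa [Matrix.transpose_mul, hB, Matrix.mul_assoc] using this
  · have e1 : Bmᵀ * B = B * Bm := by
      calc Bmᵀ * B = Bmᵀ * Bᵀ := by rw [hB]
        _ = (B * Bm)ᵀ := by rw [Matrix.transpose_mul]
        _ = B * Bm := h4
    rw [e1]; exact h4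
  · have e1 : B * Bmᵀ = Bm * B := by
      calc B * Bmᵀ = Bᵀ * Bmᵀ := by rw [hB]
        _ = (Bm * B)ᵀ := by rw [Matrix.transpose_mul]
        _ = Bm * B := h3
    rw [e1]; exact h3

lemma quad_transform {m n : Type*} [Fintype m] [Fintype n]
    (A : Matrix m n ℝ) (M : Matrix m m ℝ) (v : n → ℝ) :
    v ⬝ᵥ (Aᵀ * M * A) *ᵥ v = (A *ᵥ v) ⬝ᵥ M *ᵥ (A *ᵥ v) := by
  rw [Matrix.dotProduct_mulVec, Matrix.dotProduct_mulVec, Matrix.vecMul_mulVec,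
    Matrix.dotProduct_mulVec, Matrix.vecMul_vecMul]

lemma psd_quad_nonneg {m : Type*} [Fintype m] {M : Matrix m m ℝ}
    (hM : M.PosSemidef) (v : m → ℝ) : 0 ≤ v ⬝ᵥ M *ᵥ v := by
  simpa using hM.dotProduct_mulVec_nonneg v

lemma psd_quad_sub_le {m : Type*} [Fintype m] {M : Matrix m m ℝ}
    (hM : M.PosSemidef) (u v : m → ℝ) :
    (u - v) ⬝ᵥ M *ᵥ (u - v) ≤ 2 * (u ⬝ᵥ M *ᵥ u) + 2 * (v ⬝ᵥ M *ᵥ v) := by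
  have key : (u - v) ⬝ᵥ M *ᵥ (u - v) + (u + v) ⬝ᵥ M *ᵥ (u + v)
      = 2 * (u ⬝ᵥ M *ᵥ u) + 2 * (v ⬝ᵥ M *ᵥ v) := by
    simp only [Matrix.mulVec_sub, Matrix.mulVec_add, sub_dotProduct,
      add_dotProduct, dotProduct_sub, dotProduct_add]
    ring
  have := psd_quad_nonneg hM (u + v)
  linarith

lemma dotProduct_self_nonneg' {m : Type*} [Fintype m] (v : m → ℝ) : 0 ≤ v ⬝ᵥ v :=
  Finset.sum_nonneg fun _ _ => mul_self_nonneg _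

open scoped MatrixOrder in
lemma qf_le_trace {m : Type*} [Fintype m] [DecidableEq m] {M : Matrix m m ℝ}
    (hM : M.PosSemidef) (v : m → ℝ) :
    v ⬝ᵥ M *ᵥ v ≤ M.trace * (v ⬝ᵥ v) := by
  set N := CFC.sqrt M with hNdef
  have hNN : N * N = M := by rw [← pow_two]; exact CFC.sq_sqrt M hM.nonneg
  have hNsymm : Nᵀ = N := (CFC.sqrt_nonneg M).posSemidef.1
  have h1 : v ⬝ᵥ M *ᵥ v = (N *ᵥ v) ⬝ᵥ (N *ᵥ v) := by
    rw [← hNN, ← Matrix.mulVec_mulVec, Matrix.dotProduct_mulVec, ← Matrix.mulVec_transpose, hNsymm]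
  have h2 : ∀ i, (N *ᵥ v) i ^ 2 ≤ (∑ j, N i j ^ 2) * (v ⬝ᵥ v) := by
    intro i
    have := Finset.sum_mul_sq_le_sq_mul_sq Finset.univ (fun j => N i j) v
    simpa [Matrix.mulVec, dotProduct, pow_two] using this
  have h3 : M.trace = ∑ i, ∑ j, N i j ^ 2 := by
    rw [← hNN]
    simp only [Matrix.trace, Matrix.diag, Matrix.mul_apply, pow_two]
    refine Finset.sum_congr rfl fun i _ => Finset.sum_congr rfl fun j _ => ?_
    rw [show N j i = Nᵀ i j from rfl, hNsymm]
  calc v ⬝ᵥ M *ᵥ v = ∑ i, (N *ᵥ v) i ^ 2 := by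
        rw [h1]; simp [dotProduct, pow_two]
    _ ≤ ∑ i, (∑ j, N i j ^ 2) * (v ⬝ᵥ v) := Finset.sum_le_sum fun i _ => h2 i
    _ = M.trace * (v ⬝ᵥ v) := by rw [h3, Finset.sum_mul]

lemma huber_sq_le {q : ℕ} {b : ℝ} (hb : 0 < b) (y : Fin q → ℝ) :
    huber b y ⬝ᵥ huber b y ≤ b ^ 2 := by
  unfold huber
  set c := min 1 (b / Real.sqrt (y ⬝ᵥ y)) with hc
  have hval : (c • y) ⬝ᵥ (c • y) = c ^ 2 * (y ⬝ᵥ y) := by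
    simp [smul_dotProduct, dotProduct_smul, smul_eq_mul]; ring
  rw [hval]
  rcases eq_or_lt_of_le (dotProduct_self_nonneg' y) with h0 | hpos
  · rw [← h0]; simpa using sq_nonneg b
  · have hsq : Real.sqrt (y ⬝ᵥ y) > 0 := Real.sqrt_pos.mpr hpos
    have hcnn : 0 ≤ c := le_min zero_le_one (le_of_lt (div_pos hb hsq))
    have hcle : c ≤ b / Real.sqrt (y ⬝ᵥ y) := min_le_right _ _
    have hcsq : c ^ 2 ≤ (b / Real.sqrt (y ⬝ᵥ y)) ^ 2 := pow_le_pow_left₀ hcnn hcle 2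
    calc c ^ 2 * (y ⬝ᵥ y) ≤ (b / Real.sqrt (y ⬝ᵥ y)) ^ 2 * (y ⬝ᵥ y) :=
          mul_le_mul_of_nonneg_right hcsq (le_of_lt hpos)
      _ = b ^ 2 / (y ⬝ᵥ y) * (y ⬝ᵥ y) := by rw [div_pow, Real.sq_sqrt (le_of_lt hpos)]
      _ = b ^ 2 := by field_simp

lemma recon_identity {p q : ℕ} (Z : Matrix (Fin q) (Fin p) ℝ)
    (ZS : Matrix (Fin p) (Fin q) ℝ) (hZZZ : ZS * Z * ZS = ZS)
    (x : Fin p → ℝ) (eps h : Fin q → ℝ) :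
    (ZS * Z) *ᵥ (x - ZS *ᵥ ((Z *ᵥ x + eps) - h)) = ZS *ᵥ (h - eps) := by
  have h2 : ZS * Z * (ZS * Z) = ZS * Z := by
    rw [← Matrix.mul_assoc, hZZZ]
  simp only [Matrix.mulVec_sub, Matrix.mulVec_add, Matrix.mulVec_mulVec, hZZZ, h2]
  abel

/-- Proposition A.6, bounded risk of rLS.IO under IO contamination:
for ANY (arbitrarily contaminated) state `X`, ideally distributed errors `ε` with
covariance `V`, the reconstruction error `e = X − Z^Σ(Y − H_b(Y − ZKY))` of the
rLS.IO satisfies the pointwise bound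
`eᵀ D⁻ e ≤ 2 εᵀ B⁻ ε + 2 H_b(...)ᵀ B⁻ H_b(...)` in the seminorm
`D⁻ = (Z^Σ Z)ᵀ Σ⁻ (Z^Σ Z)`, whence `E[eᵀ D⁻ e] ≤ 2 tr(B⁻(V + b² I))`. -/
theorem rLSIO_bounded_risk {Ω : Type*} [MeasurableSpace Ω]
    (μ : Measure Ω) [IsProbabilityMeasure μ] {p q : ℕ}
    (X : Ω → Fin p → ℝ) (ε : Ω → Fin q → ℝ)
    (Z : Matrix (Fin q) (Fin p) ℝ)
    (S : Matrix (Fin p) (Fin p) ℝ) (hS : S.PosSemidef)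
    (V : Matrix (Fin q) (Fin q) ℝ) (hV : V.PosSemidef)
    (hXmeas : Measurable X) (hεmeas : Measurable ε)
    (hεL2 : ∀ j, MemLp (fun ω => ε ω j) 2 μ)
    (hεmean : ∀ j, ∫ ω, ε ω j ∂μ = 0)
    (hCovε : Matrix.of (fun i j => ∫ ω, ε ω i * ε ω j ∂μ) = V)
    (b : ℝ) (hb : 0 < b)
    (Sm : Matrix (Fin p) (Fin p) ℝ)
    (hS1 : Sm * S * Sm = Sm) (hS2 : S * Sm * S = S)
    (hS3 : (Sm * S)ᵀ = Sm * S) (hS4 : (S * Sm)ᵀ = S * Sm)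
    (Bm : Matrix (Fin q) (Fin q) ℝ)
    (hB1 : Bm * (Z * S * Zᵀ) * Bm = Bm)
    (hB2 : (Z * S * Zᵀ) * Bm * (Z * S * Zᵀ) = Z * S * Zᵀ)
    (hB3 : (Bm * (Z * S * Zᵀ))ᵀ = Bm * (Z * S * Zᵀ))
    (hB4 : ((Z * S * Zᵀ) * Bm)ᵀ = (Z * S * Zᵀ) * Bm)
    (Cm : Matrix (Fin q) (Fin q) ℝ)
    (hC1 : Cm * (Z * S * Zᵀ + V) * Cm = Cm)
    (hC2 : (Z * S * Zᵀ + V) * Cm * (Z * S * Zᵀ + V) = Z * S * Zᵀ + V)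
    (hC3 : (Cm * (Z * S * Zᵀ + V))ᵀ = Cm * (Z * S * Zᵀ + V))
    (hC4 : ((Z * S * Zᵀ + V) * Cm)ᵀ = (Z * S * Zᵀ + V) * Cm)
    (Y : Ω → Fin q → ℝ) (hY : ∀ ω, Y ω = Z.mulVec (X ω) + ε ω)
    (K : Matrix (Fin p) (Fin q) ℝ) (hK : K = S * Zᵀ * Cm)
    (ZS : Matrix (Fin p) (Fin q) ℝ) (hZS : ZS = S * Zᵀ * Bm)
    (Dm : Matrix (Fin p) (Fin p) ℝ) (hDm : Dm = (ZS * Z)ᵀ * Sm * (ZS * Z))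
    (e : Ω → Fin p → ℝ)
    (he : ∀ ω, e ω = X ω - ZS.mulVec (Y ω - huber b (Y ω - (Z * K).mulVec (Y ω)))) :
    (∀ ω, e ω ⬝ᵥ Dm.mulVec (e ω) ≤
        2 * (ε ω ⬝ᵥ Bm.mulVec (ε ω)) +
        2 * (huber b (Y ω - (Z * K).mulVec (Y ω)) ⬝ᵥ
              Bm.mulVec (huber b (Y ω - (Z * K).mulVec (Y ω))))) ∧
    (∫ ω, e ω ⬝ᵥ Dm.mulVec (e ω) ∂μ) ≤
        2 * Matrix.trace (Bm * (V + b ^ 2 • (1 : Matrix (Fin q) (Fin q) ℝ))) := by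
  have hSsymm : Sᵀ = S := hS.1
  have hVsymm : Vᵀ = V := hV.1
  have hBsymm : (Z * S * Zᵀ)ᵀ = Z * S * Zᵀ := by
    simp [Matrix.transpose_mul, hSsymm, Matrix.mul_assoc]
  have hBpsd : (Z * S * Zᵀ).PosSemidef := hS.mul_mul_conjTranspose_same Z
  have hBmsymm : Bmᵀ = Bm := penrose_symm hBsymm hB1 hB2 hB3 hB4
  have hBmpsd : Bm.PosSemidef := by
    have h := hBpsd.mul_mul_conjTranspose_same Bm
    have e1 : Bmᴴ = Bm := hBmsymm
    rw [e1, hB1] at h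
    exact h
  -- matrix identities
  have hZZZ : ZS * Z * ZS = ZS := by
    rw [hZS]
    calc S * Zᵀ * Bm * Z * (S * Zᵀ * Bm) = S * Zᵀ * (Bm * (Z * S * Zᵀ) * Bm) := by
          simp only [Matrix.mul_assoc]
      _ = S * Zᵀ * Bm := by rw [hB1]
  have hZSB : ZSᵀ * Sm * ZS = Bm := by
    rw [hZS]
    have h1 : (S * Zᵀ * Bm)ᵀ = Bm * Z * S := by
      simp [Matrix.transpose_mul, hSsymm, hBmsymm, Matrix.mul_assoc]
    rw [h1]
    calc Bm * Z * S * Sm * (S * Zᵀ * Bm) = Bm * (Z * (S * Sm * S) * Zᵀ) * Bm := by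
          simp only [Matrix.mul_assoc]
      _ = Bm * (Z * S * Zᵀ) * Bm := by rw [hS2]
      _ = Bm := hB1
  -- pointwise identity
  have hid : ∀ ω, e ω ⬝ᵥ Dm *ᵥ (e ω) =
      (huber b (Y ω - (Z * K) *ᵥ Y ω) - ε ω) ⬝ᵥ
        Bm *ᵥ (huber b (Y ω - (Z * K) *ᵥ Y ω) - ε ω) := by
    intro ω
    set Hω := huber b (Y ω - (Z * K) *ᵥ Y ω) with hHw
    have heω : e ω = X ω - ZS *ᵥ ((Z *ᵥ X ω + ε ω) - Hω) := by
      rw [he ω, ← hHw, hY ω]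
    have hkey : (ZS * Z) *ᵥ e ω = ZS *ᵥ (Hω - ε ω) := by
      rw [heω]; exact recon_identity Z ZS hZZZ (X ω) (ε ω) Hω
    calc e ω ⬝ᵥ Dm *ᵥ e ω = ((ZS * Z) *ᵥ e ω) ⬝ᵥ Sm *ᵥ ((ZS * Z) *ᵥ e ω) := by
          rw [hDm]; exact quad_transform _ _ _
      _ = (ZS *ᵥ (Hω - ε ω)) ⬝ᵥ Sm *ᵥ (ZS *ᵥ (Hω - ε ω)) := by rw [hkey]
      _ = (Hω - ε ω) ⬝ᵥ (ZSᵀ * Sm * ZS) *ᵥ (Hω - ε ω) := (quad_transform ZS Sm _).symm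
      _ = (Hω - ε ω) ⬝ᵥ Bm *ᵥ (Hω - ε ω) := by rw [hZSB]
  have part1 : ∀ ω, e ω ⬝ᵥ Dm.mulVec (e ω) ≤
      2 * (ε ω ⬝ᵥ Bm.mulVec (ε ω)) +
      2 * (huber b (Y ω - (Z * K).mulVec (Y ω)) ⬝ᵥ
            Bm.mulVec (huber b (Y ω - (Z * K).mulVec (Y ω)))) := by
    intro ω
    rw [hid ω]
    have := psd_quad_sub_le hBmpsd (huber b (Y ω - (Z * K) *ᵥ Y ω)) (ε ω)
    linarith
  refine ⟨part1, ?_⟩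
  -- measurability
  have hYm : Measurable Y := by
    have hYe : Y = fun ω => Z *ᵥ X ω + ε ω := funext hY
    rw [hYe]
    apply measurable_pi_lambda
    intro i
    simp only [Pi.add_apply, Matrix.mulVec, dotProduct]
    exact (Finset.measurable_sum _ fun j _ =>
      (measurable_const.mul ((measurable_pi_apply j).comp hXmeas))).add
      ((measurable_pi_apply i).comp hεmeas)
  have hhub : Measurable (huber b : (Fin q → ℝ) → (Fin q → ℝ)) := by
    apply measurable_pi_lambda
    intro i
    unfold huber
    simp only [Pi.smul_apply, smul_eq_mul]
    have hdot : Measurable fun y : Fin q → ℝ => y ⬝ᵥ y :=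
      Finset.measurable_sum _ fun j _ => (measurable_pi_apply j).mul (measurable_pi_apply j)
    exact ((measurable_const.min
      (measurable_const.div (Real.continuous_sqrt.measurable.comp hdot)))).mul
      (measurable_pi_apply i)
  have hWm : Measurable (fun ω => Y ω - (Z * K) *ᵥ Y ω) := by
    apply measurable_pi_lambda
    intro i
    simp only [Pi.sub_apply, Matrix.mulVec, dotProduct]
    exact ((measurable_pi_apply i).comp hYm).sub
      (Finset.measurable_sum _ fun j _ => measurable_const.mul ((measurable_pi_apply j).comp hYm))
  have hHm : Measurable (fun ω => huber b (Y ω - (Z * K) *ᵥ Y ω)) := hhub.comp hWm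
  have qfm : ∀ {u : Ω → Fin q → ℝ}, Measurable u →
      Measurable (fun ω => u ω ⬝ᵥ Bm *ᵥ u ω) := by
    intro u hu
    simp only [dotProduct, Matrix.mulVec]
    apply Finset.measurable_sum
    intro i _
    exact ((measurable_pi_apply i).comp hu).mul
      (Finset.measurable_sum _ fun j _ => measurable_const.mul ((measurable_pi_apply j).comp hu))
  -- integrability of products of errors
  have hmulint : ∀ i j, Integrable (fun ω => ε ω i * ε ω j) μ := by
    intro i j
    have h : MemLp ((fun ω => ε ω i) • (fun ω => ε ω j)) 1 μ :=
      (hεL2 j).smul (hεL2 i)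
    rw [memLp_one_iff_integrable] at h
    exact h
  have hVij : ∀ i j, ∫ ω, ε ω i * ε ω j ∂μ = V i j := by
    intro i j
    rw [← hCovε]
    rfl
  have hVsym' : ∀ i j, V j i = V i j := by
    intro i j
    exact congrFun (congrFun hVsymm i) j
  have hG1eq : (fun ω => ε ω ⬝ᵥ Bm *ᵥ ε ω) = fun ω => ∑ i, ∑ j, Bm i j * (ε ω i * ε ω j) := by
    funext ω
    simp only [dotProduct, Matrix.mulVec, Finset.mul_sum]
    refine Finset.sum_congr rfl fun i _ => Finset.sum_congr rfl fun j _ => by ring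
  have hG1int : Integrable (fun ω => ε ω ⬝ᵥ Bm *ᵥ ε ω) μ := by
    rw [hG1eq]
    exact integrable_finset_sum _ fun i _ =>
      integrable_finset_sum _ fun j _ => (hmulint i j).const_mul _
  have hG1val : ∫ ω, ε ω ⬝ᵥ Bm *ᵥ ε ω ∂μ = Matrix.trace (Bm * V) := by
    rw [hG1eq]
    rw [integral_finset_sum _ fun i _ =>
      integrable_finset_sum _ fun j _ => (hmulint i j).const_mul (Bm i j)]
    have : ∀ i : Fin q, ∫ ω, ∑ j, Bm i j * (ε ω i * ε ω j) ∂μ = ∑ j, Bm i j * V i j := by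
      intro i
      rw [integral_finset_sum _ fun j _ => (hmulint i j).const_mul _]
      refine Finset.sum_congr rfl fun j _ => ?_
      rw [integral_const_mul, hVij]
    rw [Finset.sum_congr rfl fun i _ => this i]
    simp only [Matrix.trace, Matrix.diag, Matrix.mul_apply]
    exact Finset.sum_congr rfl fun i _ => Finset.sum_congr rfl fun j _ => by rw [hVsym']
  -- bound on the huber quadratic form
  have htrBm : 0 ≤ Bm.trace := by
    apply Finset.sum_nonneg
    intro i _
    have h := psd_quad_nonneg hBmpsd (Pi.single i 1)
    simpa [dotProduct, Matrix.mulVec, Pi.single_apply, Finset.mul_sum,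
      Finset.sum_ite_eq] using h
  have hG2le : ∀ ω, huber b (Y ω - (Z * K) *ᵥ Y ω) ⬝ᵥ Bm *ᵥ huber b (Y ω - (Z * K) *ᵥ Y ω)
      ≤ b ^ 2 * Bm.trace := by
    intro ω
    calc huber b (Y ω - (Z * K) *ᵥ Y ω) ⬝ᵥ Bm *ᵥ huber b (Y ω - (Z * K) *ᵥ Y ω)
        ≤ Bm.trace * (huber b (Y ω - (Z * K) *ᵥ Y ω) ⬝ᵥ huber b (Y ω - (Z * K) *ᵥ Y ω)) :=
          qf_le_trace hBmpsd _
      _ ≤ Bm.trace * b ^ 2 := mul_le_mul_of_nonneg_left (huber_sq_le hb _) htrBm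
      _ = b ^ 2 * Bm.trace := by ring
  have hG2int : Integrable
      (fun ω => huber b (Y ω - (Z * K) *ᵥ Y ω) ⬝ᵥ Bm *ᵥ huber b (Y ω - (Z * K) *ᵥ Y ω)) μ := by
    apply Integrable.mono' (integrable_const (b ^ 2 * Bm.trace))
      ((qfm hHm).aestronglyMeasurable)
    filter_upwards with ω
    rw [Real.norm_eq_abs, abs_of_nonneg (psd_quad_nonneg hBmpsd _)]
    exact hG2le ω
  have hG2val : ∫ ω, huber b (Y ω - (Z * K) *ᵥ Y ω) ⬝ᵥ Bm *ᵥ huber b (Y ω - (Z * K) *ᵥ Y ω) ∂μ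
      ≤ b ^ 2 * Bm.trace := by
    calc ∫ ω, huber b (Y ω - (Z * K) *ᵥ Y ω) ⬝ᵥ Bm *ᵥ huber b (Y ω - (Z * K) *ᵥ Y ω) ∂μ
        ≤ ∫ _, b ^ 2 * Bm.trace ∂μ := integral_mono hG2int (integrable_const _) hG2le
      _ = b ^ 2 * Bm.trace := by simp
  -- integrability of the main integrand
  have hFeq : (fun ω => e ω ⬝ᵥ Dm.mulVec (e ω)) =
      fun ω => (huber b (Y ω - (Z * K) *ᵥ Y ω) - ε ω) ⬝ᵥ
        Bm *ᵥ (huber b (Y ω - (Z * K) *ᵥ Y ω) - ε ω) := funext hid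
  have hGint : Integrable (fun ω =>
      2 * (ε ω ⬝ᵥ Bm *ᵥ ε ω) +
      2 * (huber b (Y ω - (Z * K) *ᵥ Y ω) ⬝ᵥ Bm *ᵥ huber b (Y ω - (Z * K) *ᵥ Y ω))) μ :=
    (hG1int.const_mul 2).add (hG2int.const_mul 2)
  have hFint : Integrable (fun ω => e ω ⬝ᵥ Dm.mulVec (e ω)) μ := by
    apply Integrable.mono' hGint ?_
    · filter_upwards with ω
      rw [Real.norm_eq_abs, abs_of_nonneg (by rw [hid ω]; exact psd_quad_nonneg hBmpsd _)]
      exact part1 ω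
    · rw [hFeq]
      exact (qfm (hHm.sub hεmeas)).aestronglyMeasurable
  calc (∫ ω, e ω ⬝ᵥ Dm.mulVec (e ω) ∂μ)
      ≤ ∫ ω, 2 * (ε ω ⬝ᵥ Bm *ᵥ ε ω) +
          2 * (huber b (Y ω - (Z * K) *ᵥ Y ω) ⬝ᵥ Bm *ᵥ huber b (Y ω - (Z * K) *ᵥ Y ω)) ∂μ :=
        integral_mono hFint hGint part1
    _ = 2 * (∫ ω, ε ω ⬝ᵥ Bm *ᵥ ε ω ∂μ) +
        2 * (∫ ω, huber b (Y ω - (Z * K) *ᵥ Y ω) ⬝ᵥ Bm *ᵥ huber b (Y ω - (Z * K) *ᵥ Y ω) ∂μ) := by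
        rw [integral_add (hG1int.const_mul 2) (hG2int.const_mul 2),
          integral_const_mul, integral_const_mul]
    _ ≤ 2 * Matrix.trace (Bm * V) + 2 * (b ^ 2 * Bm.trace) := by
        rw [hG1val]
        have := hG2val
        linarith
    _ = 2 * Matrix.trace (Bm * (V + b ^ 2 • (1 : Matrix (Fin q) (Fin q) ℝ))) := by
        rw [Matrix.mul_add, Matrix.trace_add, Matrix.mul_smul, Matrix.mul_one,
          Matrix.trace_smul, smul_eq_mul]
        ring
end

section
/- The matrix identity (Z^Σ)ᵀ (Z^Σ Z)ᵀ Σ⁻ (Z^Σ Z) Z^Σ = B⁻ holds, where Σ ⪰ 0 symmetric p×p, Z ∈ ℝ^{q×p}, B = ZΣZᵀ, Z^Σ = ΣZᵀB⁻, and ⁻ is the Moore–Penrose pseudoinverse. -/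
open Matrix

/-- With `Σ ⪰ 0` symmetric with Moore–Penrose pseudoinverse `Σ⁻`,
`B = Z Σ Zᵀ` with Moore–Penrose pseudoinverse `B⁻`, and `Z^Σ = Σ Zᵀ B⁻`, one has
`(Z^Σ)ᵀ (Z^Σ Z)ᵀ Σ⁻ (Z^Σ Z) Z^Σ = B⁻`. -/
theorem ZSigma_pullback_identity {p q : ℕ}
    (S : Matrix (Fin p) (Fin p) ℝ) (hS : S.PosSemidef)
    (Sm : Matrix (Fin p) (Fin p) ℝ)
    (hS1 : Sm * S * Sm = Sm) (hS2 : S * Sm * S = S)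
    (hS3 : (Sm * S)ᵀ = Sm * S) (hS4 : (S * Sm)ᵀ = S * Sm)
    (Z : Matrix (Fin q) (Fin p) ℝ)
    (Bm : Matrix (Fin q) (Fin q) ℝ)
    (hB1 : Bm * (Z * S * Zᵀ) * Bm = Bm)
    (hB2 : (Z * S * Zᵀ) * Bm * (Z * S * Zᵀ) = Z * S * Zᵀ)
    (hB3 : (Bm * (Z * S * Zᵀ))ᵀ = Bm * (Z * S * Zᵀ))
    (hB4 : ((Z * S * Zᵀ) * Bm)ᵀ = (Z * S * Zᵀ) * Bm) :
    (S * Zᵀ * Bm)ᵀ * ((S * Zᵀ * Bm) * Z)ᵀ * Sm * ((S * Zᵀ * Bm) * Z) *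
      (S * Zᵀ * Bm) = Bm := by
  have hSsym : Sᵀ = S := by
    have := hS.isHermitian
    simpa [Matrix.IsHermitian, Matrix.conjTranspose_eq_transpose_of_trivial] using this
  set B := Z * S * Zᵀ with hBdef
  have hBsym : Bᵀ = B := by
    rw [hBdef]
    simp [Matrix.transpose_mul, hSsym, Matrix.mul_assoc]
  have t1 : B * Bmᵀ = Bm * B := by
    calc B * Bmᵀ = (Bm * Bᵀ)ᵀ := by rw [Matrix.transpose_mul, Matrix.transpose_transpose]
      _ = (Bm * B)ᵀ := by rw [hBsym]
      _ = Bm * B := hB3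
  have t2 : Bmᵀ * B = B * Bm := by
    calc Bmᵀ * B = (Bᵀ * Bm)ᵀ := by rw [Matrix.transpose_mul, Matrix.transpose_transpose]
      _ = (B * Bm)ᵀ := by rw [hBsym]
      _ = B * Bm := hB4
  have hY1 : Bmᵀ * B * Bmᵀ = Bmᵀ := by
    calc Bmᵀ * B * Bmᵀ = Bmᵀ * Bᵀ * Bmᵀ := by rw [hBsym]
      _ = (Bm * B * Bm)ᵀ := by simp [Matrix.transpose_mul, Matrix.mul_assoc]
      _ = Bmᵀ := by rw [hB1]
  have hY2 : B * Bmᵀ * B = B := by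
    calc B * Bmᵀ * B = Bᵀ * Bmᵀ * Bᵀ := by rw [hBsym]
      _ = (B * Bm * B)ᵀ := by simp [Matrix.transpose_mul, Matrix.mul_assoc]
      _ = Bᵀ := by rw [hB2]
      _ = B := hBsym
  have sAY : (B * Bmᵀ)ᵀ = B * Bmᵀ := by rw [t1]; exact hB3
  have hAXAY : B * Bm = B * Bmᵀ := by
    calc B * Bm = (B * Bmᵀ * B) * Bm := by rw [hY2]
      _ = (B * Bmᵀ) * (B * Bm) := by rw [Matrix.mul_assoc (B * Bmᵀ) B Bm]
      _ = ((B * Bm)ᵀ * (B * Bmᵀ)ᵀ)ᵀ := by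
          simp [Matrix.transpose_mul, Matrix.transpose_transpose, t1]
      _ = ((B * Bm) * (B * Bmᵀ))ᵀ := by rw [hB4, sAY]
      _ = ((B * Bm * B) * Bmᵀ)ᵀ := by rw [Matrix.mul_assoc (B * Bm) B Bmᵀ]
      _ = (B * Bmᵀ)ᵀ := by rw [hB2]
      _ = B * Bmᵀ := sAY
  have sXA : (Bm * B)ᵀ = Bm * B := hB3
  have sYA : (Bmᵀ * B)ᵀ = Bmᵀ * B := by rw [t2]; exact hB4
  have hXAYA : Bm * B = Bmᵀ * B := by
    calc Bm * B = Bm * (B * Bmᵀ * B) := by rw [hY2]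
      _ = (Bm * B) * (Bmᵀ * B) := by simp only [Matrix.mul_assoc]
      _ = ((Bmᵀ * B)ᵀ * (Bm * B)ᵀ)ᵀ := by
          simp [Matrix.transpose_mul, Matrix.transpose_transpose, t2]
      _ = ((Bmᵀ * B) * (Bm * B))ᵀ := by rw [sXA, sYA]
      _ = (Bmᵀ * (B * Bm * B))ᵀ := by simp only [Matrix.mul_assoc]
      _ = (Bmᵀ * B)ᵀ := by rw [hB2]
      _ = Bmᵀ * B := sYA
  have hBmsym : Bmᵀ = Bm := by
    calc Bmᵀ = Bmᵀ * B * Bmᵀ := hY1.symm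
      _ = Bm * B * Bmᵀ := by rw [← hXAYA]
      _ = Bm * (B * Bmᵀ) := Matrix.mul_assoc Bm B Bmᵀ
      _ = Bm * (B * Bm) := by rw [← hAXAY]
      _ = Bm * B * Bm := (Matrix.mul_assoc Bm B Bm).symm
      _ = Bm := hB1
  have key : ∀ X : Matrix (Fin q) (Fin p) ℝ, X * S * Sm * S = X * S := by
    intro X
    calc X * S * Sm * S = X * (S * Sm * S) := by simp only [Matrix.mul_assoc]
      _ = X * S := by rw [hS2]
  have keyB : ∀ X : Matrix (Fin q) (Fin q) ℝ,
      X * Z * S * Zᵀ * Bm * Z * S * Zᵀ = X * Z * S * Zᵀ := by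
    intro X
    calc X * Z * S * Zᵀ * Bm * Z * S * Zᵀ
        = X * ((Z * S * Zᵀ) * Bm * (Z * S * Zᵀ)) := by simp only [Matrix.mul_assoc]
      _ = X * (Z * S * Zᵀ) := by rw [hB2]
      _ = X * Z * S * Zᵀ := by simp only [Matrix.mul_assoc]
  calc (S * Zᵀ * Bm)ᵀ * ((S * Zᵀ * Bm) * Z)ᵀ * Sm * ((S * Zᵀ * Bm) * Z) * (S * Zᵀ * Bm)
      = Bm * Z * S * Zᵀ * Bm * Z * S * Sm * S * Zᵀ * Bm * Z * S * Zᵀ * Bm := by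
        simp only [Matrix.transpose_mul, Matrix.transpose_transpose, hSsym, hBmsym,
          Matrix.mul_assoc]
    _ = Bm * Z * S * Zᵀ * Bm * Z * S * Zᵀ * Bm * Z * S * Zᵀ * Bm := by
        rw [key (Bm * Z * S * Zᵀ * Bm * Z)]
    _ = Bm * Z * S * Zᵀ * Bm * Z * S * Zᵀ * Bm := by
        rw [keyB (Bm * Z * S * Zᵀ * Bm)]
    _ = Bm * Z * S * Zᵀ * Bm := by rw [keyB Bm]
    _ = Bm * B * Bm := by rw [hBdef]; simp only [Matrix.mul_assoc]
    _ = Bm := hB1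
end
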